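/- arXiv:2204.07784 — 11 statements merged into one kernel-verified Lean document; each statement's English description precedes it below -/
import Mathlib

section
/- Let f(x) ∈ ℤ[x] be monic and irreducible over ℚ with |f(0)| ≥ 2 and f(0) squarefree, and let p be a prime. Then for every integer n ≥ 0, the polynomial f(x^{p^n}) is irreducible over ℚ. -/
open Polynomial IntermediateField

/-- Norm argument: if `β` generates a power basis over `ℚ` with minimal polynomial
the reduction of `f`, then `β` is not a `p`-th power. -/
lemma aux_not_pow (f : Polynomial ℤ) (hmonic : f.Monic)
    (habs : 2 ≤ |f.coeff 0|) (hsf : Squarefree (f.coeff 0))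
    (p : ℕ) (hp : p.Prime) {L : Type*} [Field L] [Algebra ℚ L]
    (pb : PowerBasis ℚ L) (β : L) (hgen : pb.gen = β)
    (hmin : minpoly ℚ β = f.map (Int.castRingHom ℚ))
    (b : L) (hb : b ^ p = β) : False := by
  haveI : FiniteDimensional ℚ L := pb.finite
  haveI : IsScalarTower ℤ ℚ L := IsScalarTower.of_algebraMap_eq
    (fun z => by simp only [eq_intCast, map_intCast])
  -- β is integral over ℤ
  have hβint : IsIntegral ℤ β := by
    refine ⟨f, hmonic, ?_⟩
    have h1 : aeval β (f.map (Int.castRingHom ℚ)) = 0 := by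
      rw [← hmin]; exact minpoly.aeval ℚ β
    rwa [show Int.castRingHom ℚ = algebraMap ℤ ℚ from rfl,
      aeval_map_algebraMap, aeval_def] at h1
  have hbint : IsIntegral ℤ b := by
    refine IsIntegral.of_pow (n := p) hp.pos ?_
    rw [hb]; exact hβint
  have hNbint : IsIntegral ℤ (Algebra.norm ℚ b) := Algebra.isIntegral_norm ℚ hbint
  obtain ⟨r, hr⟩ := IsIntegrallyClosed.isIntegral_iff.mp hNbint
  set c := f.coeff 0 with hc
  have hNβ : Algebra.norm ℚ β = (-1 : ℚ) ^ pb.dim * ((c : ℤ) : ℚ) := by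
    have h2 := Algebra.PowerBasis.norm_gen_eq_coeff_zero_minpoly pb
    rw [hgen, hmin] at h2
    rw [h2, coeff_map]
    rfl
  have hNβ' : Algebra.norm ℚ β = ((r : ℤ) : ℚ) ^ p := by
    rw [← hb, map_pow]
    congr 1
    rw [← hr]; rfl
  have h6 : (-1 : ℚ) ^ pb.dim * ((c : ℤ) : ℚ) = ((r : ℤ) : ℚ) ^ p := by
    rw [← hNβ, hNβ']
  have hceq : c = r ^ p ∨ c = -(r ^ p) := by
    rcases neg_one_pow_eq_or ℚ pb.dim with h | h
    · left
      rw [h, one_mul] at h6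
      exact_mod_cast h6
    · right
      rw [h, neg_one_mul, neg_eq_iff_eq_neg] at h6
      have : ((c : ℤ) : ℚ) = ((-(r ^ p) : ℤ) : ℚ) := by push_cast; linarith
      exact_mod_cast this
  have hrp : r ^ p ∣ c := by
    rcases hceq with h | h
    · rw [h]
    · rw [h]; exact (dvd_neg).mpr dvd_rfl
  have hrr : r * r ∣ c := by
    refine dvd_trans ?_ hrp
    have : r ^ p = r * r * r ^ (p - 2) := by
      rw [← pow_two, ← pow_add]
      congr 1
      have := hp.two_le
      omega
    exact ⟨r ^ (p - 2), this⟩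
  have hru : IsUnit r := hsf r hrr
  have hr1 : |r| = 1 := Int.isUnit_iff.mp hru |>.elim (fun h => by simp [h]) (fun h => by simp [h])
  have habs' : |c| = 1 := by
    rcases hceq with h | h <;>
      rw [h] <;> simp [abs_pow, hr1]
  omega

/-- Key lemma: the single-prime case. -/
lemma key_prime_case (f : Polynomial ℤ) (hmonic : f.Monic)
    (hirr : Irreducible (f.map (Int.castRingHom ℚ)))
    (habs : 2 ≤ |f.coeff 0|) (hsf : Squarefree (f.coeff 0))
    (p : ℕ) (hp : p.Prime) :
    Irreducible ((f.comp (X ^ p)).map (Int.castRingHom ℚ)) := by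
  rw [Polynomial.map_comp, Polynomial.map_pow, map_X]
  refine Polynomial.irreducible_comp (hmonic.map _) (monic_X_pow p) hirr ?_
  intro E _ _ x hx
  rw [Polynomial.map_pow, map_X]
  apply X_pow_sub_C_irreducible_of_prime hp
  intro b hb
  have hfQ0 : f.map (Int.castRingHom ℚ) ≠ 0 := hirr.ne_zero
  have hxQ : IsIntegral ℚ x := by
    rw [← minpoly.ne_zero_iff, hx]; exact hfQ0
  refine @aux_not_pow f hmonic habs hsf p hp (↥ℚ⟮x⟯) _ ℚ⟮x⟯.algebra'
    (IntermediateField.adjoin.powerBasis hxQ) (AdjoinSimple.gen ℚ x)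
    (IntermediateField.adjoin.powerBasis_gen hxQ) ?_ b hb
  rw [← hx]
  exact IntermediateField.minpoly_gen ℚ x

theorem stmt_0 (f : Polynomial ℤ) (hmonic : f.Monic)
    (hirr : Irreducible (f.map (Int.castRingHom ℚ)))
    (habs : 2 ≤ |f.coeff 0|) (hsf : Squarefree (f.coeff 0))
    (p : ℕ) (hp : p.Prime) (n : ℕ) :
    Irreducible ((f.comp (X ^ p ^ n)).map (Int.castRingHom ℚ)) := by
  induction n with
  | zero => simpa using hirr
  | succ n ih =>
    have hmono : (f.comp (X ^ p ^ n)).Monic := by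
      apply hmonic.comp (monic_X_pow _)
      rw [natDegree_X_pow]
      exact pow_ne_zero n hp.ne_zero
    have hcoeff : (f.comp (X ^ p ^ n)).coeff 0 = f.coeff 0 := by
      rw [coeff_zero_eq_eval_zero, eval_comp, eval_pow, eval_X,
        zero_pow (pow_ne_zero n hp.ne_zero), coeff_zero_eq_eval_zero]
    have key := key_prime_case (f.comp (X ^ p ^ n)) hmono ih
      (by rw [hcoeff]; exact habs) (by rw [hcoeff]; exact hsf) p hp
    have hcomp : (f.comp (X ^ p ^ n)).comp (X ^ p) = f.comp (X ^ p ^ (n + 1)) := by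
      rw [comp_assoc, X_pow_comp, ← pow_mul, ← pow_succ']
    rwa [hcomp] at key
end

section
/- Let f(x) = x^n + A x^m + B ∈ ℚ[x] with 0 < m < n and d = gcd(n, m). Then the discriminant of f equals (-1)^{n(n-1)/2} B^{m-1} (n^{n/d} B^{(n-m)/d} - (-1)^{n/d} (n-m)^{(n-m)/d} m^{m/d} A^{n/d})^d. -/
open Polynomial Finset

private theorem aux1 (n : ℕ) (α : Fin n → ℂ) :
    ∏ i, ∏ j ∈ Finset.Ioi i, (α i - α j) ^ 2
      = (-1) ^ (n * (n - 1) / 2) * ∏ i, ∏ j ∈ Finset.univ.erase i, (α i - α j) := by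
  have key := Finset.prod_prod_Ioi_mul_eq_prod_prod_off_diag (fun j i : Fin n => α i - α j)
  have key2 : ∏ i, ∏ j ∈ Finset.Ioi i, ((α i - α j) * (α j - α i))
      = ∏ i, ∏ j ∈ Finset.univ.erase i, (α i - α j) := by
    rw [key]
    convert rfl using 2 with i
    congr!
    · rw [← Finset.compl_singleton]
  have h1 : ∏ i, ∏ j ∈ Finset.Ioi i, ((α i - α j) * (α j - α i))
      = (-1:ℂ) ^ (n * (n-1)/2) * ∏ i, ∏ j ∈ Finset.Ioi i, (α i - α j)^2 := by
    rw [show (∏ i, ∏ j ∈ Finset.Ioi i, ((α i - α j) * (α j - α i)))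
        = ∏ i, ((-1:ℂ)^(Finset.Ioi i).card * ∏ j ∈ Finset.Ioi i, (α i - α j)^2) by
      refine Finset.prod_congr rfl fun i _ => ?_
      rw [← Finset.prod_const, ← Finset.prod_mul_distrib]
      exact Finset.prod_congr rfl fun j _ => by ring]
    rw [Finset.prod_mul_distrib, Finset.prod_pow_eq_pow_sum]
    congr 2
    simp only [Fin.card_Ioi]
    rw [Fin.sum_univ_eq_sum_range (fun i => n - 1 - i),
      Finset.sum_range_reflect (fun i => i) n, Finset.sum_range_id]
  rw [← key2, h1, ← mul_assoc, ← pow_add, ← two_mul,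
    Even.neg_one_pow ⟨_, (two_mul _)⟩, one_mul]

private theorem aux2 (n : ℕ) (α : Fin n → ℂ) (k : Fin n) :
    eval (α k) (derivative (∏ i, (X - C (α i)))) = ∏ j ∈ Finset.univ.erase k, (α k - α j) := by
  classical
  have hk : k ∈ Finset.univ.val := Finset.mem_univ k
  have hS : (Finset.univ.val.map α) = α k ::ₘ ((Finset.univ.erase k).val.map α) := by
    rw [Finset.erase_val, ← Multiset.map_cons, Multiset.cons_erase hk]
  have hmem : α k ∈ Finset.univ.val.map α := Multiset.mem_map_of_mem α hk
  have he : (Finset.univ.val.map α).erase (α k) = (Finset.univ.erase k).val.map α := by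
    rw [hS, Multiset.erase_cons_head]
  have h := Polynomial.eval_multiset_prod_X_sub_C_derivative (S := Finset.univ.val.map α) hmem
  rw [he, Multiset.map_map, Multiset.map_map] at h
  rw [Finset.prod_eq_multiset_prod, Finset.prod_eq_multiset_prod]
  exact h

private theorem aux3 (c₀ cs ω : ℂ) (e k : ℕ) (hωe : ω^e = 1) :
    ∏ j ∈ Finset.range (k*e), (c₀ + cs * ω^j) = (∏ j ∈ Finset.range e, (c₀ + cs*ω^j))^k := by
  induction k with
  | zero => simp
  | succ k ih =>
    rw [Nat.succ_mul, Finset.prod_range_add, ih, pow_succ]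
    congr 1
    refine Finset.prod_congr rfl fun i _ => ?_
    rw [pow_add, pow_mul', hωe, one_pow, one_mul]

theorem stmt_1 (n m : ℕ) (A B : ℚ) (hm : 0 < m) (hmn : m < n)
    (d : ℕ) (hd : d = Nat.gcd n m)
    (α : Fin n → ℂ)
    (hroots : (X ^ n + C A * X ^ m + C B : Polynomial ℚ).map (algebraMap ℚ ℂ)
      = ∏ i, (X - C (α i))) :
    ∏ i, ∏ j ∈ Finset.Ioi i, (α i - α j) ^ 2
      = (-1) ^ (n * (n - 1) / 2) * (B : ℂ) ^ (m - 1) *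
        ((n : ℂ) ^ (n / d) * (B : ℂ) ^ ((n - m) / d)
          - (-1) ^ (n / d) * ((n : ℂ) - (m : ℂ)) ^ ((n - m) / d)
            * (m : ℂ) ^ (m / d) * (A : ℂ) ^ (n / d)) ^ d := by
  have hn : 0 < n := lt_trans hm hmn
  set a : ℂ := (A : ℂ) with ha
  set b : ℂ := (B : ℂ) with hb
  set N := n - m with hN
  have hNpos : 0 < N := Nat.sub_pos_of_lt hmn
  have hdpos : 0 < d := hd ▸ Nat.gcd_pos_of_pos_left m hn
  have hdn : d ∣ n := hd ▸ Nat.gcd_dvd_left n m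
  have hdm : d ∣ m := hd ▸ Nat.gcd_dvd_right n m
  have hdN : d ∣ N := Nat.dvd_sub hdn hdm
  set u := n / d with hu
  set v := m / d with hv
  set e := N / d with he
  have hn_eq : n = u * d := (Nat.div_mul_cancel hdn).symm
  have hm_eq : m = v * d := (Nat.div_mul_cancel hdm).symm
  have hN_eq : N = e * d := (Nat.div_mul_cancel hdN).symm
  have hepos : 0 < e := Nat.div_pos (Nat.le_of_dvd hNpos hdN) hdpos
  have huve : u = v + e := by
    apply Nat.eq_of_mul_eq_mul_right hdpos
    rw [add_mul]; omega
  have hnne : (n:ℂ) ≠ 0 := Nat.cast_ne_zero.mpr hn.ne'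
  have hNc : ((N:ℕ) : ℂ) = (n:ℂ) - (m:ℂ) := by push_cast [hN, Nat.cast_sub hmn.le]; ring
  -- complex polynomial identity
  have hP : (X ^ n + C a * X ^ m + C b : Polynomial ℂ) = ∏ i, (X - C (α i)) := by
    rw [← hroots]
    simp [Polynomial.map_add, Polynomial.map_mul, Polynomial.map_pow]
    rfl
  have hev : ∀ z : ℂ, z^n + a*z^m + b = ∏ i, (z - α i) := by
    intro z
    have := congrArg (eval z) hP
    simpa [eval_prod] using this
  -- Step: products over roots
  have hprodneg : ∀ (g : Fin n → ℂ), ∏ i, (- g i) = (-1:ℂ)^n * ∏ i, g i := by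
    intro g
    rw [show (fun i => - g i) = fun i => (-1) * g i from funext fun i => by ring,
      Finset.prod_mul_distrib, Finset.prod_const, Finset.card_univ, Fintype.card_fin]
  have hprod_alpha : ∏ i, α i = (-1:ℂ)^n * b := by
    have h0 := hev 0
    rw [zero_pow hn.ne', zero_pow hm.ne', mul_zero, zero_add, zero_add] at h0
    have : ∏ i, (0 - α i) = ∏ i, (- α i) := by simp
    rw [this, hprodneg] at h0
    have h2 := congrArg (fun z => (-1:ℂ)^n * z) h0
    rw [← mul_assoc, ← pow_add, ← two_mul, Even.neg_one_pow ⟨_, (two_mul _)⟩, one_mul] at h2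
    exact h2.symm
  have h8 : ∀ z : ℂ, ∏ k, (α k - z) = (-1:ℂ)^n * (z^n + a*z^m + b) := by
    intro z
    rw [hev z, show (fun k => α k - z) = fun k => -(z - α k) from funext fun k => by ring]
    exact hprodneg _
  -- derivative evaluation
  have hD : ∀ k : Fin n, ∏ j ∈ Finset.univ.erase k, (α k - α j)
      = (n:ℂ) * α k^(n-1) + (m:ℂ) * a * α k^(m-1) := by
    intro k
    rw [← aux2, ← hP]
    simp only [derivative_add, derivative_C_mul, derivative_X_pow, derivative_C,
      eval_add, eval_mul, eval_pow, eval_natCast, eval_X, eval_C, add_zero]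
    ring
  -- roots of x^N = -(m*a)/n
  obtain ⟨r, hr⟩ := IsAlgClosed.exists_pow_nat_eq (k := ℂ) (-((m:ℂ)*a)/(n:ℂ)) hNpos
  have hζ := Complex.isPrimitiveRoot_exp N hNpos.ne'
  set ζ : ℂ := Complex.exp (2 * Real.pi * Complex.I / N) with hzeta
  set ω : ℂ := ζ ^ m with homega
  set s : ℂ := r ^ m with hs
  set c : ℂ := a * ((n:ℂ) - (m:ℂ)) / (n:ℂ) with hc
  have hfac : ∀ x : ℂ, x^N - r^N = ∏ j ∈ Finset.range N, (x - ζ^j * r) := by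
    intro x
    have h := X_pow_sub_C_eq_prod hζ hNpos (rfl : r^N = r^N)
    have := congrArg (eval x) h
    simpa [eval_prod] using this
  -- value of f at the auxiliary roots
  have hfj : ∀ j : ℕ, ((ζ^j*r)^n + a*(ζ^j*r)^m + b) = b + c * s * ω^j := by
    intro j
    have hβN : (ζ^j*r)^N = -((m:ℂ)*a)/(n:ℂ) := by
      rw [mul_pow, ← pow_mul, mul_comm j N, pow_mul, hζ.pow_eq_one, one_pow, one_mul, hr]
    have hβn : (ζ^j*r)^n = (ζ^j*r)^m * (ζ^j*r)^N := by
      rw [← pow_add]; congr 1; omega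
    rw [hβn, hβN, hc, hs, homega, mul_pow, ← pow_mul, ← pow_mul, mul_comm j m]
    field_simp
    ring
  -- the big product
  have hbig : ∏ k, ((n:ℂ) * α k^N + (m:ℂ)*a)
      = (n:ℂ)^n * ((-1:ℂ)^n)^N * ∏ j ∈ Finset.range N, (b + c * s * ω^j) := by
    have h1 : ∀ k : Fin n, (n:ℂ) * α k^N + (m:ℂ)*a = (n:ℂ) * (α k^N - r^N) := by
      intro k; rw [hr]; field_simp; ring
    calc ∏ k, ((n:ℂ) * α k^N + (m:ℂ)*a)
        = ∏ k, ((n:ℂ) * (α k^N - r^N)) := Finset.prod_congr rfl fun k _ => h1 k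
      _ = (n:ℂ)^n * ∏ k, (α k^N - r^N) := by
          rw [Finset.prod_mul_distrib, Finset.prod_const, Finset.card_univ, Fintype.card_fin]
      _ = (n:ℂ)^n * ∏ k, ∏ j ∈ Finset.range N, (α k - ζ^j * r) := by
          rw [Finset.prod_congr rfl fun k _ => hfac (α k)]
      _ = (n:ℂ)^n * ∏ j ∈ Finset.range N, ∏ k, (α k - ζ^j * r) := by
          rw [Finset.prod_comm]
      _ = (n:ℂ)^n * ∏ j ∈ Finset.range N, ((-1:ℂ)^n * (b + c * s * ω^j)) := by
          congr 1
          refine Finset.prod_congr rfl fun j _ => ?_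
          rw [h8 (ζ^j*r), hfj j]
      _ = (n:ℂ)^n * (((-1:ℂ)^n)^N * ∏ j ∈ Finset.range N, (b + c * s * ω^j)) := by
          rw [Finset.prod_mul_distrib, Finset.prod_const, Finset.card_range]
      _ = _ := by ring
  -- periodicity and primitive root of order e
  have hωe : ω^e = 1 := by
    rw [homega, ← pow_mul, show m * e = N * v by rw [hm_eq, hN_eq]; ring, pow_mul,
      hζ.pow_eq_one, one_pow]
  have hper : ∏ j ∈ Finset.range N, (b + c*s*ω^j)
      = (∏ j ∈ Finset.range e, (b + c*s*ω^j))^d := by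
    rw [show N = d * e by rw [hN_eq]; ring]
    exact aux3 b (c*s) ω e d hωe
  have horder : orderOf ζ = N := hζ.eq_orderOf.symm
  have hωord : orderOf ω = e := by
    rw [homega, orderOf_pow' ζ hm.ne', horder, hN, Nat.gcd_sub_self_left hmn.le, ← hd]
  have hω : IsPrimitiveRoot ω e := hωord ▸ IsPrimitiveRoot.orderOf ω
  have hinner : ∏ j ∈ Finset.range e, (b + c*s*ω^j) = b^e - (-(c*s))^e := by
    have h := X_pow_sub_C_eq_prod hω hepos (rfl : (-(c*s))^e = (-(c*s))^e)
    have h2 := congrArg (eval b) h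
    simp only [eval_sub, eval_pow, eval_X, eval_C, eval_prod] at h2
    rw [h2]
    exact Finset.prod_congr rfl fun j _ => by ring
  have hse : s^e = (-((m:ℂ)*a)/(n:ℂ))^v := by
    rw [hs, ← pow_mul, show m * e = N * v by rw [hm_eq, hN_eq]; ring, pow_mul, hr]
  have hfactor : ∀ k : Fin n, (n:ℂ) * α k^(n-1) + (m:ℂ)*a*α k^(m-1)
      = α k^(m-1) * ((n:ℂ)*α k^N + (m:ℂ)*a) := by
    intro k
    have hp : α k^(n-1) = α k^(m-1) * α k^N := by rw [← pow_add]; congr 1; omega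
    rw [hp]; ring
  have hnn : (n:ℂ)^n = ((n:ℂ)^u)^d := by rw [← pow_mul, ← hn_eq]
  have hsign : ((-1:ℂ)^n)^(m-1) * ((-1:ℂ)^n)^N = 1 := by
    rw [← pow_add, ← pow_mul]
    apply Even.neg_one_pow
    have h1 : (m - 1) + N = n - 1 := by omega
    rw [h1]
    have h2 := Nat.even_mul_succ_self (n-1)
    rwa [Nat.sub_add_cancel hn, mul_comm] at h2
  have hinner2 : (n:ℂ)^u * (b^e - (-(c*s))^e)
      = (n:ℂ)^u * b^e - (-1:ℂ)^u * ((n:ℂ)-(m:ℂ))^e * (m:ℂ)^v * a^u := by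
    have hcs : (-(c*s))^e = (-1:ℂ)^e * c^e * s^e := by
      rw [neg_pow, mul_pow, ← mul_assoc]
    rw [hcs, hse, hc, huve, mul_sub]
    congr 1
    have e1 : (a * ((n:ℂ)-(m:ℂ)) / (n:ℂ))^e = a^e * ((n:ℂ)-(m:ℂ))^e / (n:ℂ)^e := by
      rw [div_pow, mul_pow]
    have e2 : (-((m:ℂ)*a)/(n:ℂ))^v = (-1:ℂ)^v * (m:ℂ)^v * a^v / (n:ℂ)^v := by
      rw [div_pow, neg_pow, mul_pow, ← mul_assoc]
    rw [e1, e2, pow_add]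
    field_simp
    ring
  have hkey : ((-1:ℂ)^n * b)^(m-1) * ((n:ℂ)^n * ((-1:ℂ)^n)^N * (b^e - (-(c*s))^e)^d)
      = b^(m-1) * ((n:ℂ)^u * b^e - (-1:ℂ)^u * ((n:ℂ)-(m:ℂ))^e * (m:ℂ)^v * a^u)^d := by
    calc ((-1:ℂ)^n * b)^(m-1) * ((n:ℂ)^n * ((-1:ℂ)^n)^N * (b^e - (-(c*s))^e)^d)
        = (((-1:ℂ)^n)^(m-1) * ((-1:ℂ)^n)^N)
            * (b^(m-1) * (((n:ℂ)^u)^d * (b^e - (-(c*s))^e)^d)) := by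
          rw [hnn]; ring
      _ = b^(m-1) * (((n:ℂ)^u) * (b^e - (-(c*s))^e))^d := by
          rw [hsign, one_mul, ← mul_pow]
      _ = _ := by rw [hinner2]
  calc ∏ i, ∏ j ∈ Finset.Ioi i, (α i - α j)^2
      = (-1)^(n*(n-1)/2) * ∏ i, ∏ j ∈ Finset.univ.erase i, (α i - α j) := aux1 n α
    _ = (-1)^(n*(n-1)/2) * ∏ k, ((n:ℂ) * α k^(n-1) + (m:ℂ)*a*α k^(m-1)) := by
        rw [Finset.prod_congr rfl fun k _ => hD k]
    _ = (-1)^(n*(n-1)/2) * ((∏ i, α i)^(m-1) * ∏ k, ((n:ℂ)*α k^N + (m:ℂ)*a)) := by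
        congr 1
        rw [← Finset.prod_pow, ← Finset.prod_mul_distrib]
        exact Finset.prod_congr rfl fun k _ => hfactor k
    _ = (-1)^(n*(n-1)/2) * (((-1:ℂ)^n * b)^(m-1)
          * ((n:ℂ)^n * ((-1:ℂ)^n)^N * (b^e - (-(c*s))^e)^d)) := by
        rw [hprod_alpha, hbig, hper, hinner]
    _ = (-1)^(n*(n-1)/2) * (b^(m-1)
          * ((n:ℂ)^u * b^e - (-1:ℂ)^u * ((n:ℂ)-(m:ℂ))^e * (m:ℂ)^v * a^u)^d) := by
        rw [hkey]
    _ = _ := by ring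
end

section
/- Let F(x) = x^m + A x^{m-1} + B ∈ ℤ[x], let p be a prime, and set D = m^m B - (-1)^m (m-1)^{m-1} A^m. Then for every integer n ≥ 0, the discriminant of F(x^{p^n}) equals (-1)^{m p^n (m p^n - 1)/2} · B^{(m-1)p^n - 1} · p^{m n p^n} · D^{p^n}. -/
set_option maxRecDepth 8000
open Polynomial Finset

lemma aux_swap {ι : Type*} (s : Finset ι) (S : Multiset ℂ) (f : ι → ℂ → ℂ) :
    ∏ i ∈ s, (S.map (f i)).prod = (S.map fun x => ∏ i ∈ s, f i x).prod := by
  induction S using Multiset.induction with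
  | empty => simp
  | cons a S ih => simp [Finset.prod_mul_distrib, ih]

lemma aux_neg {ι : Type*} (s : Finset ι) (f : ι → ℂ) :
    ∏ i ∈ s, (-f i) = (-1)^s.card * ∏ i ∈ s, f i := by
  calc ∏ i ∈ s, (-f i) = ∏ i ∈ s, (-1 * f i) := by simp
    _ = (∏ _i ∈ s, (-1:ℂ)) * ∏ i ∈ s, f i := Finset.prod_mul_distrib
    _ = _ := by rw [Finset.prod_const]

lemma key (N k q : ℕ) (hN : N = (k+2)*q) (hq : 1 ≤ q) (A B : ℂ)
    (α : Fin N → ℂ)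
    (hroots : ((X ^ (k+2) + C A * X ^ (k+1) + C B : Polynomial ℂ)).comp (X ^ q)
        = ∏ i, (X - C (α i))) :
    ∏ i, ∏ j ∈ Finset.Ioi i, (α i - α j) ^ 2
      = (-1) ^ (N * (N - 1) / 2) * B ^ ((k+1) * q - 1)
        * (q : ℂ) ^ N * (((k+2):ℂ)^(k+2) * B - (-1)^k * ((k+1):ℂ)^(k+1) * A^(k+2)) ^ q := by
  set Fc : Polynomial ℂ := X ^ (k+2) + C A * X ^ (k+1) + C B with hFc
  have hGeval : ∀ c : ℂ, Fc.eval (c ^ q) = ∏ i, (c - α i) := by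
    intro c
    have := congrArg (Polynomial.eval c) hroots
    simpa [Polynomial.eval_comp, Polynomial.eval_prod] using this
  have hprodα : ∏ i, α i = (-1) ^ N * B := by
    have h0 := hGeval 0
    rw [zero_pow (by omega)] at h0
    simp only [hFc, eval_add, eval_pow, eval_X, eval_mul, eval_C,
      zero_pow (by omega : k + 2 ≠ 0), zero_pow (by omega : k + 1 ≠ 0),
      mul_zero, zero_add, add_zero, zero_mul] at h0
    have hneg : ∏ x : Fin N, -α x = (-1:ℂ)^N * ∏ x, α x := by
      calc ∏ x : Fin N, -α x = ∏ x : Fin N, (-1 * α x) := by simp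
        _ = (∏ _x : Fin N, (-1:ℂ)) * ∏ x, α x := Finset.prod_mul_distrib
        _ = (-1:ℂ)^N * ∏ x, α x := by simp
    rw [h0]
    simp only [zero_sub, hneg]
    rw [← mul_assoc, ← pow_add, Even.neg_one_pow ⟨N, rfl⟩, one_mul]
  have hder : derivative (∏ i : Fin N, (X - C (α i)))
      = C (q:ℂ) * X ^ (q-1) * (derivative Fc).comp (X ^ q) := by
    rw [← hroots, Polynomial.derivative_comp, Polynomial.derivative_X_pow]
  have hkey : ∀ i : Fin N, (∏ j ∈ Finset.univ.erase i, (α i - α j))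
      = (q:ℂ) * (α i)^(q-1) * (derivative Fc).eval ((α i)^q) := by
    intro i
    have h1 : eval (α i) (derivative (∏ j : Fin N, (X - C (α j))))
        = ∏ j ∈ univ.erase i, (α i - α j) := by
      rw [← Finset.mul_prod_erase _ _ (Finset.mem_univ i), derivative_mul]
      simp [Polynomial.eval_prod]
    rw [← h1, hder]
    simp [Polynomial.eval_comp]
  -- counting lemma
  have hcount : ∑ i : Fin N, (Finset.Ioi i).card = N * (N-1) / 2 := by
    simp only [Fin.card_Ioi]
    rw [Fin.sum_univ_eq_sum_range (fun i => N - 1 - i)]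
    rw [← Finset.sum_range_reflect]
    have hc : ∀ j ∈ Finset.range N, N - 1 - (N - 1 - j) = j := by
      intro j hj; have := Finset.mem_range.1 hj; omega
    rw [Finset.sum_congr rfl hc, Finset.sum_range_id]
  -- sign lemma
  have hsign : ∏ i : Fin N, ∏ j ∈ Finset.univ.erase i, (α i - α j)
      = (-1:ℂ) ^ (N*(N-1)/2) * ∏ i, ∏ j ∈ Finset.Ioi i, (α i - α j)^2 := by
    have h := Finset.prod_prod_Ioi_mul_eq_prod_prod_off_diag (fun i j : Fin N => α j - α i)
    simp only [compl_singleton] at h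
    have h' : ∏ i : Fin N, ∏ j ∈ Finset.univ.erase i, (α i - α j)
        = ∏ i : Fin N, ∏ j ∈ Finset.Ioi i, ((α i - α j) * (α j - α i)) := by
      convert h.symm using 5
    rw [h']
    have h2 : ∀ i : Fin N, ∏ j ∈ Finset.Ioi i, (α i - α j) * (α j - α i)
        = (-1:ℂ)^(Finset.Ioi i).card * ∏ j ∈ Finset.Ioi i, (α i - α j)^2 := by
      intro i
      rw [← Finset.prod_const, ← Finset.prod_mul_distrib]
      exact Finset.prod_congr rfl fun j _ => by ring
    calc ∏ i : Fin N, ∏ j ∈ Finset.Ioi i, (α i - α j) * (α j - α i)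
        = ∏ i : Fin N, ((-1:ℂ)^(Finset.Ioi i).card * ∏ j ∈ Finset.Ioi i, (α i - α j)^2) :=
          Finset.prod_congr rfl fun i _ => h2 i
      _ = (-1:ℂ) ^ (N*(N-1)/2) * ∏ i, ∏ j ∈ Finset.Ioi i, (α i - α j)^2 := by
          rw [Finset.prod_mul_distrib, Finset.prod_pow_eq_pow_sum, hcount]
  -- derivative of Fc evaluated
  have hdF : ∀ c : ℂ, (derivative Fc).eval c = c^k * (((k:ℂ)+2) * c + ((k:ℂ)+1) * A) := by
    intro c
    simp only [hFc, derivative_add, derivative_C, derivative_mul, derivative_X_pow,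
      add_zero, eval_add, eval_mul, eval_C, eval_pow, eval_X, Nat.add_sub_cancel, zero_mul,
      zero_add, mul_zero, eval_natCast]
    push_cast
    ring
  -- the auxiliary polynomial  (k+2) X^q + (k+1) A  and its roots
  have hc2 : ((k:ℂ)+2) ≠ 0 := by
    have h2 : ((k+2:ℕ):ℂ) ≠ 0 := Nat.cast_ne_zero.2 (by omega)
    push_cast at h2; exact h2
  set hpoly : Polynomial ℂ := C ((k:ℂ)+2) * X^q + C (((k:ℂ)+1) * A) with hhp
  set γ : ℂ := -(((k:ℂ)+1) * A) / ((k:ℂ)+2) with hγ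
  set E : ℂ := Fc.eval γ with hE
  have hsplits : hpoly.Splits := IsAlgClosed.splits hpoly
  have hdeg : hpoly.natDegree = q := by
    rw [hhp, natDegree_add_C, natDegree_C_mul_X_pow _ _ hc2]
  have hcard : hpoly.roots.card = q := by
    rw [← hdeg]; exact (Polynomial.splits_iff_card_roots.1 hsplits)
  have hlead : hpoly.leadingCoeff = (k:ℂ)+2 := by
    rw [Polynomial.leadingCoeff, hdeg, hhp, coeff_add, coeff_C_mul, coeff_X_pow, coeff_C,
      if_pos rfl, if_neg (by omega : ¬ q = 0)]
    ring
  have hfact : hpoly = C ((k:ℂ)+2) * (hpoly.roots.map fun a => X - C a).prod := by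
    conv_lhs => rw [hsplits.eq_prod_roots, hlead]
  have hroot_eval : ∀ μ ∈ hpoly.roots, Fc.eval (μ^q) = E := by
    intro μ hμ
    have h0 : hpoly.eval μ = 0 := isRoot_of_mem_roots hμ
    simp only [hhp, eval_add, eval_mul, eval_C, eval_pow, eval_X] at h0
    have hμq : μ^q = γ := by
      rw [hγ]; field_simp; linear_combination h0
    rw [hμq, hE]
  have hbig : ∏ i : Fin N, (((k:ℂ)+2) * (α i)^q + ((k:ℂ)+1) * A)
      = ((k:ℂ)+2)^N * ((-1:ℂ)^N * E)^q := by
    have he : ∀ i : Fin N, ((k:ℂ)+2) * (α i)^q + ((k:ℂ)+1) * A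
        = ((k:ℂ)+2) * ((hpoly.roots.map fun μ => α i - μ)).prod := by
      intro i
      have h3 := congrArg (Polynomial.eval (α i)) hfact
      simp only [hhp, eval_add, eval_mul, eval_C, eval_pow, eval_X,
        Polynomial.eval_multiset_prod, Multiset.map_map, Function.comp, eval_sub] at h3
      exact h3
    rw [Finset.prod_congr rfl fun i _ => he i, Finset.prod_mul_distrib, Finset.prod_const,
      Finset.card_univ, Fintype.card_fin, aux_swap]
    congr 1
    have hconst : ∀ μ ∈ hpoly.roots, (∏ i : Fin N, (α i - μ)) = (-1:ℂ)^N * E := by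
      intro μ hμ
      calc ∏ i : Fin N, (α i - μ) = ∏ i : Fin N, -(μ - α i) := by
            exact Finset.prod_congr rfl fun i _ => by ring
        _ = (-1:ℂ)^N * ∏ i : Fin N, (μ - α i) := by
            rw [aux_neg, Finset.card_univ, Fintype.card_fin]
        _ = (-1:ℂ)^N * E := by rw [← hGeval μ, hroot_eval μ hμ]
    rw [Multiset.map_congr rfl hconst, Multiset.map_const', Multiset.prod_replicate, hcard]
  -- product of derivative evals
  have hprodD : ∏ i : Fin N, (derivative Fc).eval ((α i)^q)
      = ((-1:ℂ)^N * B)^(q*k) * (((k:ℂ)+2)^N * ((-1:ℂ)^N * E)^q) := by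
    calc ∏ i : Fin N, (derivative Fc).eval ((α i)^q)
        = ∏ i : Fin N, ((α i)^(q*k) * (((k:ℂ)+2) * (α i)^q + ((k:ℂ)+1) * A)) := by
          refine Finset.prod_congr rfl fun i _ => ?_
          rw [hdF ((α i)^q), ← pow_mul]
      _ = (∏ i, α i)^(q*k) * ∏ i : Fin N, (((k:ℂ)+2) * (α i)^q + ((k:ℂ)+1) * A) := by
          rw [Finset.prod_mul_distrib, Finset.prod_pow]
      _ = ((-1:ℂ)^N * B)^(q*k) * (((k:ℂ)+2)^N * ((-1:ℂ)^N * E)^q) := by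
          rw [hprodα, hbig]
  -- value of D
  have hED : ((k:ℂ)+2)^(k+2) * E
      = ((k:ℂ)+2)^(k+2) * B - (-1:ℂ)^k * ((k:ℂ)+1)^(k+1) * A^(k+2) := by
    have hx : ((k:ℂ)+2) * γ = (-1) * (((k:ℂ)+1) * A) := by rw [hγ]; field_simp
    have hexp : ((k:ℂ)+2)^(k+2) * E
        = (((k:ℂ)+2)*γ)^(k+2) + ((k:ℂ)+2) * A * (((k:ℂ)+2)*γ)^(k+1) + ((k:ℂ)+2)^(k+2) * B := by
      rw [hE, hFc]
      simp only [eval_add, eval_mul, eval_pow, eval_X, eval_C]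
      rw [mul_pow, mul_pow]
      ring
    rw [hexp, hx, mul_pow, mul_pow, mul_pow, mul_pow]
    ring
  have hDq : ((k:ℂ)+2)^N * E^q
      = (((k:ℂ)+2)^(k+2) * B - (-1:ℂ)^k * ((k:ℂ)+1)^(k+1) * A^(k+2))^q := by
    rw [hN, pow_mul, ← mul_pow, hED]
  -- final assembly
  obtain ⟨q', rfl⟩ : ∃ q', q = q' + 1 := ⟨q - 1, by omega⟩
  have hT : ∏ i : Fin N, ∏ j ∈ Finset.Ioi i, (α i - α j)^2
      = (-1:ℂ)^(N*(N-1)/2) * ∏ i : Fin N, ∏ j ∈ Finset.univ.erase i, (α i - α j) := by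
    rw [hsign, ← mul_assoc, ← pow_add, Even.neg_one_pow ⟨N*(N-1)/2, rfl⟩, one_mul]
  have hone : (-1:ℂ)^(N*(q'+1-1)) * (-1:ℂ)^(N*((q'+1)*k)) * (-1:ℂ)^(N*(q'+1)) = 1 := by
    rw [← pow_add, ← pow_add]
    apply Even.neg_one_pow
    have h3 : N*(q'+1-1) + N*((q'+1)*k) + N*(q'+1) = N*((k+2)*(q'+1)-1) := by
      simp only [Nat.add_sub_cancel]
      rw [show (k+2)*(q'+1) = (q' + ((q'+1)*k + (q'+1))) + 1 from by ring, Nat.add_sub_cancel]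
      ring
    rw [h3, ← hN]
    rcases Nat.even_or_odd N with h | h
    · exact h.mul_right _
    · exact (Nat.Odd.sub_odd h odd_one).mul_left _
  have hBexp : (B:ℂ)^(q'+1-1) * B^((q'+1)*k) = B^((k+1)*(q'+1)-1) := by
    rw [← pow_add]
    congr 1
    simp only [Nat.add_sub_cancel]
    rw [show (k+1)*(q'+1) = (q' + (q'+1)*k) + 1 from by ring, Nat.add_sub_cancel]
  calc ∏ i : Fin N, ∏ j ∈ Finset.Ioi i, (α i - α j)^2
      = (-1:ℂ)^(N*(N-1)/2) * ∏ i : Fin N, ∏ j ∈ Finset.univ.erase i, (α i - α j) := hT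
    _ = (-1:ℂ)^(N*(N-1)/2) * ∏ i : Fin N,
          (((q'+1:ℕ):ℂ) * (α i)^(q'+1-1) * (derivative Fc).eval ((α i)^(q'+1))) :=
        congrArg (((-1:ℂ)^(N*(N-1)/2)) * ·) (Finset.prod_congr rfl fun i _ => hkey i)
    _ = (-1:ℂ)^(N*(N-1)/2) * ((((q'+1:ℕ):ℂ))^N * (∏ i, α i)^(q'+1-1)
          * ∏ i : Fin N, (derivative Fc).eval ((α i)^(q'+1))) := by
        rw [Finset.prod_mul_distrib, Finset.prod_mul_distrib, Finset.prod_const,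
          Finset.prod_pow, Finset.card_univ, Fintype.card_fin]
    _ = (-1:ℂ)^(N*(N-1)/2) * ((((q'+1:ℕ):ℂ))^N * ((-1:ℂ)^N*B)^(q'+1-1)
          * (((-1:ℂ)^N*B)^((q'+1)*k) * (((k:ℂ)+2)^N * ((-1:ℂ)^N*E)^(q'+1)))) := by
        rw [hprodα, hprodD]
    _ = (-1:ℂ)^(N*(N-1)/2) * ((((q'+1:ℕ):ℂ))^N
          * (((-1:ℂ)^(N*(q'+1-1)) * (-1:ℂ)^(N*((q'+1)*k)) * (-1:ℂ)^(N*(q'+1)))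
          * ((B:ℂ)^(q'+1-1) * B^((q'+1)*k)) * (((k:ℂ)+2)^N * E^(q'+1)))) := by
        rw [mul_pow ((-1:ℂ)^N) B, mul_pow ((-1:ℂ)^N) B, mul_pow ((-1:ℂ)^N) E,
          ← pow_mul, ← pow_mul, ← pow_mul]
        ring
    _ = (-1:ℂ)^(N*(N-1)/2) * B^((k+1)*(q'+1)-1) * (((q'+1:ℕ):ℂ))^N
          * (((k:ℂ)+2)^(k+2) * B - (-1:ℂ)^k * ((k:ℂ)+1)^(k+1) * A^(k+2))^(q'+1) := by
        rw [hone, hBexp, hDq]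
        ring

theorem stmt_2 (m : ℕ) (hm : 2 ≤ m) (A B : ℤ) (p : ℕ) (hp : p.Prime) (n : ℕ)
    (D : ℤ) (hD : D = (m : ℤ) ^ m * B - (-1) ^ m * ((m : ℤ) - 1) ^ (m - 1) * A ^ m)
    (α : Fin (m * p ^ n) → ℂ)
    (hroots : ((X ^ m + C A * X ^ (m - 1) + C B : Polynomial ℤ).comp (X ^ p ^ n)).map
        (Int.castRingHom ℂ) = ∏ i, (X - C (α i))) :
    ∏ i, ∏ j ∈ Finset.Ioi i, (α i - α j) ^ 2
      = (-1) ^ (m * p ^ n * (m * p ^ n - 1) / 2) * (B : ℂ) ^ ((m - 1) * p ^ n - 1)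
        * (p : ℂ) ^ (m * n * p ^ n) * (D : ℂ) ^ p ^ n := by
  obtain ⟨k, rfl⟩ : ∃ k, m = k + 2 := ⟨m - 2, by omega⟩
  have hq1 : 1 ≤ p ^ n := Nat.one_le_pow _ _ hp.pos
  have hroots' : ((X ^ (k+2) + C (A:ℂ) * X ^ (k+1) + C (B:ℂ)).comp (X ^ p ^ n))
      = ∏ i : Fin ((k+2) * p^n), (X - C (α i)) := by
    rw [← hroots, Polynomial.map_comp]
    simp [Nat.add_sub_cancel]
  have hmain := key ((k+2) * p^n) k (p^n) rfl hq1 (A:ℂ) (B:ℂ) α hroots'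
  rw [hmain]
  have hDC : ((D:ℂ)) = ((k:ℂ)+2)^(k+2)*(B:ℂ) - (-1:ℂ)^k*((k:ℂ)+1)^(k+1)*(A:ℂ)^(k+2) := by
    rw [hD]; push_cast; ring
  rw [← hDC]
  have hppow : (((p^n : ℕ)):ℂ)^((k+2)*p^n) = (p:ℂ)^((k+2)*n*p^n) := by
    push_cast
    rw [← pow_mul]
    congr 1
    ring
  rw [hppow]
  norm_num
end

section
/- For every prime p ≥ 3 and every integer n ≥ 0, the central binomial coefficient C(2p^{n+1}, p^{n+1}) satisfies C(2p^{n+1}, p^{n+1}) ≡ 2 (mod p^2). -/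
theorem stmt_3 (p : ℕ) (hp : p.Prime) (hp3 : 3 ≤ p) (n : ℕ) :
    Nat.choose (2 * p ^ (n + 1)) (p ^ (n + 1)) ≡ 2 [MOD p ^ 2] := by
  set m := p ^ (n + 1) with hm
  have hm0 : m ≠ 0 := pow_ne_zero _ hp.pos.ne'
  rw [← ZMod.natCast_eq_natCast_iff]
  rw [two_mul m, Nat.add_choose_eq]
  push_cast
  rw [Finset.Nat.sum_antidiagonal_eq_sum_range_succ_mk]
  have hsum : ∀ k ∈ Finset.range (m + 1),
      ((m.choose k : ZMod (p ^ 2)) * (m.choose (m - k) : ZMod (p ^ 2)))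
        = (if k = 0 then 1 else 0) + (if k = m then 1 else 0) := by
    intro k hk
    rw [Finset.mem_range] at hk
    by_cases h0 : k = 0
    · simp [h0, Ne.symm hm0]
    by_cases h1 : k = m
    · simp [h1, hm0]
    · have hk1 : p ∣ m.choose k := hp.dvd_choose_pow h0 h1
      have h2 : m - k ≠ 0 := by omega
      have h3 : m - k ≠ m := by omega
      have hk2 : p ∣ m.choose (m - k) := hp.dvd_choose_pow h2 h3
      have : (p ^ 2 : ℕ) ∣ m.choose k * m.choose (m - k) := by
        rw [sq]; exact mul_dvd_mul hk1 hk2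
      rw [← Nat.cast_mul, (ZMod.natCast_eq_zero_iff _ _).mpr this]
      simp [h0, h1]
  rw [Finset.sum_congr rfl hsum, Finset.sum_add_distrib]
  rw [Finset.sum_ite_eq' (Finset.range (m + 1)) 0 (fun _ => (1 : ZMod (p ^ 2)))]
  rw [Finset.sum_ite_eq' (Finset.range (m + 1)) m (fun _ => (1 : ZMod (p ^ 2)))]
  norm_num
end

section
/- Let F(x) = x^3 + A x^2 + B ∈ ℤ[x] with B squarefree, |B| ≥ 2, and suppose (A mod 4, B mod 4) lies in {(0,2),(1,1),(1,3),(2,2),(3,1),(3,3)}. Then F(x) is irreducible over ℚ. -/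
open Polynomial

theorem stmt_5 (A B : ℤ) (hB : Squarefree B) (hB2 : 2 ≤ |B|)
    (hAB : (A % 4, B % 4) ∈
      ({(0,2),(1,1),(1,3),(2,2),(3,1),(3,3)} : Set (ℤ × ℤ))) :
    Irreducible ((X ^ 3 + C A * X ^ 2 + C B : Polynomial ℤ).map (Int.castRingHom ℚ)) := by
  set p : Polynomial ℤ := X ^ 3 + C A * X ^ 2 + C B with hp
  have hmonic : p.Monic := by
    unfold p; monicity!
  have hq := hmonic.map (Int.castRingHom ℚ)
  have hdeg : (p.map (Int.castRingHom ℚ)).natDegree = 3 := by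
    rw [hmonic.natDegree_map]
    unfold p; compute_degree!
  rw [Polynomial.irreducible_iff_roots_eq_zero_of_degree_le_three (by omega) (by omega)]
  rw [Multiset.eq_zero_iff_forall_notMem]
  intro x hx
  rw [Polynomial.mem_roots hq.ne_zero, Polynomial.IsRoot, Polynomial.eval_map] at hx
  have hx : aeval x p = 0 := hx
  have hint : IsIntegral ℤ x := ⟨p, hmonic, hx⟩
  obtain ⟨r, rfl⟩ := IsIntegrallyClosed.isIntegral_iff.mp hint
  have hx' : (r : ℚ) ^ 3 + A * (r : ℚ) ^ 2 + B = 0 := by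
    have := hx
    unfold p at this
    simpa using this
  have hr : r ^ 3 + A * r ^ 2 + B = 0 := by exact_mod_cast hx'
  have hdvd : r * r ∣ B := ⟨-(r + A), by linear_combination hr⟩
  have hu : IsUnit r := hB r hdvd
  rcases Int.isUnit_iff.mp hu with h1 | h1 <;> subst h1 <;>
    simp only [Set.mem_insert_iff, Set.mem_singleton_iff, Prod.mk.injEq] at hAB <;> omega
end

section
/- Let F(x) = x^4 + A x^3 + B ∈ ℤ[x] with B squarefree, |B| ≥ 2, and suppose (A mod 4, B mod 4) lies in {(0,1),(0,2),(1,1),(1,3),(2,2),(2,3),(3,1),(3,3)}. Then F(x) is irreducible over ℚ. -/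
open Polynomial

private lemma zmod_key : ∀ (a b bb dd t : ZMod 4),
    bb * dd = b → bb + dd = t ^ 2 * b → t * (bb - dd) = a →
    ¬((a = 0 ∧ b = 1) ∨ (a = 0 ∧ b = 2) ∨ (a = 1 ∧ b = 1) ∨ (a = 1 ∧ b = 3) ∨
      (a = 2 ∧ b = 2) ∨ (a = 2 ∧ b = 3) ∨ (a = 3 ∧ b = 1) ∨ (a = 3 ∧ b = 3)) := by
  decide

private lemma cast_emod (n : ℤ) : ((n : ZMod 4)) = ((n % 4 : ℤ) : ZMod 4) :=
  (ZMod.intCast_eq_intCast_iff _ _ _).mpr (by show n % 4 = n % 4 % 4; omega)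

private def Cond (A B : ℤ) : Prop :=
  (A % 4 = 0 ∧ B % 4 = 1) ∨ (A % 4 = 0 ∧ B % 4 = 2) ∨ (A % 4 = 1 ∧ B % 4 = 1) ∨
  (A % 4 = 1 ∧ B % 4 = 3) ∨ (A % 4 = 2 ∧ B % 4 = 2) ∨ (A % 4 = 2 ∧ B % 4 = 3) ∨
  (A % 4 = 3 ∧ B % 4 = 1) ∨ (A % 4 = 3 ∧ B % 4 = 3)

private lemma cond_cast (A B : ℤ) (h : Cond A B) :
    ((A : ZMod 4) = 0 ∧ (B : ZMod 4) = 1) ∨ ((A : ZMod 4) = 0 ∧ (B : ZMod 4) = 2) ∨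
    ((A : ZMod 4) = 1 ∧ (B : ZMod 4) = 1) ∨ ((A : ZMod 4) = 1 ∧ (B : ZMod 4) = 3) ∨
    ((A : ZMod 4) = 2 ∧ (B : ZMod 4) = 2) ∨ ((A : ZMod 4) = 2 ∧ (B : ZMod 4) = 3) ∨
    ((A : ZMod 4) = 3 ∧ (B : ZMod 4) = 1) ∨ ((A : ZMod 4) = 3 ∧ (B : ZMod 4) = 3) := by
  rw [cast_emod A, cast_emod B]
  unfold Cond at h
  rcases h with ⟨h1, h2⟩ | ⟨h1, h2⟩ | ⟨h1, h2⟩ | ⟨h1, h2⟩ | ⟨h1, h2⟩ | ⟨h1, h2⟩ | ⟨h1, h2⟩ |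
    ⟨h1, h2⟩ <;> rw [h1, h2] <;> norm_num

private lemma aux_root (A B : ℤ) (hB : Squarefree B) (hAB : Cond A B) (r : ℤ)
    (h : r ^ 4 + A * r ^ 3 + B = 0) : False := by
  have hr : r * r ∣ B := ⟨r * (-(r + A)), by linear_combination h⟩
  have := Int.isUnit_iff.mp (hB r hr)
  rcases this with rfl | rfl <;> unfold Cond at hAB <;>
    · norm_num at h
      omega

private lemma aux_quad (A B : ℤ) (hB : Squarefree B) (hBne : B ≠ 0) (hAB : Cond A B)
    (a b c d : ℤ) (h0 : b * d = B) (h1 : a * d + b * c = 0) (h2 : b + d + a * c = 0)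
    (h3 : a + c = A) : False := by
  have hg : IsCoprime b d := by
    rw [Int.isCoprime_iff_gcd_eq_one]
    by_contra hne
    have hdvd : (Int.gcd b d : ℤ) * (Int.gcd b d : ℤ) ∣ B := by
      rw [← h0]; exact mul_dvd_mul (Int.gcd_dvd_left _ _) (Int.gcd_dvd_right _ _)
    have := Int.isUnit_iff.mp (hB _ hdvd)
    omega
  obtain ⟨t, rfl⟩ : b ∣ a := hg.dvd_of_dvd_mul_right ⟨-c, by linear_combination h1⟩
  obtain ⟨s, rfl⟩ : d ∣ c := hg.symm.dvd_of_dvd_mul_right ⟨-(b * t), by linear_combination h1⟩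
  have hts : B * (t + s) = 0 := by linear_combination h1 - (t + s) * h0
  have hst : s = -t := by
    have := (mul_eq_zero.mp hts).resolve_left hBne
    omega
  subst hst
  have hbd : b + d = t ^ 2 * B := by linear_combination h2 + t ^ 2 * h0
  have hA : t * (b - d) = A := by linear_combination h3
  have C1 : ((b : ZMod 4)) * d = (B : ZMod 4) := by
    have := congrArg (fun z : ℤ => (z : ZMod 4)) h0; push_cast at this; exact this
  have C2 : ((b : ZMod 4)) + d = (t : ZMod 4) ^ 2 * B := by
    have := congrArg (fun z : ℤ => (z : ZMod 4)) hbd; push_cast at this; exact this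
  have C3 : ((t : ZMod 4)) * ((b : ZMod 4) - d) = (A : ZMod 4) := by
    have := congrArg (fun z : ℤ => (z : ZMod 4)) hA; push_cast at this; exact this
  exact zmod_key _ _ _ _ _ C1 C2 C3 (cond_cast A B hAB)

private lemma monic_quad_eq (p : ℤ[X]) (hp : p.Monic) (h2 : p.natDegree = 2) :
    p = X ^ 2 + C (p.coeff 1) * X + C (p.coeff 0) := by
  have hc2 : p.coeff 2 = 1 := by have := hp.coeff_natDegree; rwa [h2] at this
  ext n
  match n with
  | 0 => simp only [coeff_add, coeff_C_mul, coeff_C, coeff_X_pow, coeff_X]; norm_num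
  | 1 => simp only [coeff_add, coeff_C_mul, coeff_C, coeff_X_pow, coeff_X]; norm_num
  | 2 => simp only [coeff_add, coeff_C_mul, coeff_C, coeff_X_pow, coeff_X, hc2]; norm_num
  | (n + 3) =>
    simp only [coeff_add, coeff_C_mul, coeff_C, coeff_X_pow, coeff_X,
      coeff_eq_zero_of_natDegree_lt (show p.natDegree < n + 3 by omega)]
    rw [if_neg (by omega), if_neg (by omega), if_neg (by omega)]
    ring

private lemma root_case (A B : ℤ) (hB : Squarefree B) (hAB : Cond A B)
    (p q : ℤ[X]) (hp : p.Monic)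
    (hpq : (X ^ 4 + C A * X ^ 3 + C B : ℤ[X]) = p * q) (hd1 : p.natDegree = 1) : False := by
  have hpe := hp.eq_X_add_C hd1
  have hroot : ((X ^ 4 + C A * X ^ 3 + C B : ℤ[X]).eval (-(p.coeff 0))) = 0 := by
    rw [hpq, eval_mul, hpe]
    simp
  simp only [eval_add, eval_mul, eval_pow, eval_X, eval_C] at hroot
  exact aux_root A B hB hAB _ hroot

private lemma factor_aux (A B : ℤ) (hB : Squarefree B) (hBne : B ≠ 0) (hAB : Cond A B)
    (p q : ℤ[X]) (hp : p.Monic) (hq : q.Monic)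
    (hpq : (X ^ 4 + C A * X ^ 3 + C B : ℤ[X]) = p * q)
    (hd : p.natDegree + q.natDegree = 4) (hp1 : p.natDegree ≠ 0) (hq1 : q.natDegree ≠ 0) :
    False := by
  have hcases : p.natDegree = 1 ∨ q.natDegree = 1 ∨ (p.natDegree = 2 ∧ q.natDegree = 2) := by
    omega
  rcases hcases with h | h | ⟨h, h'⟩
  · exact root_case A B hB hAB p q hp hpq h
  · exact root_case A B hB hAB q p hq (by rw [hpq, mul_comm]) h
  · have hpe := monic_quad_eq p hp h
    have hqe := monic_quad_eq q hq h'
    rw [hpe, hqe] at hpq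
    set a := p.coeff 1; set b := p.coeff 0; set c := q.coeff 1; set d := q.coeff 0
    have h' : (X ^ 4 + C A * X ^ 3 + C B : ℤ[X]) =
        X ^ 4 + C (a + c) * X ^ 3 + C (b + d + a * c) * X ^ 2 + C (a * d + b * c) * X +
          C (b * d) := by
      rw [hpq]; simp only [C_add, C_mul]; ring
    have e0 := Polynomial.ext_iff.mp h' 0
    have e1 := Polynomial.ext_iff.mp h' 1
    have e2 := Polynomial.ext_iff.mp h' 2
    have e3 := Polynomial.ext_iff.mp h' 3
    simp only [coeff_add, coeff_C_mul, coeff_C, coeff_X_pow, coeff_mul_X, coeff_X, mul_ite,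
      mul_one, mul_zero, if_true, if_false] at e0 e1 e2 e3
    norm_num at e0 e1 e2 e3
    exact aux_quad A B hB hBne hAB a b c d e0.symm e1.symm (by linarith) e3.symm

theorem stmt_6 (A B : ℤ) (hB : Squarefree B) (hB2 : 2 ≤ |B|)
    (hAB : (A % 4, B % 4) ∈
      ({(0,1),(0,2),(1,1),(1,3),(2,2),(2,3),(3,1),(3,3)} : Set (ℤ × ℤ))) :
    Irreducible ((X ^ 4 + C A * X ^ 3 + C B : Polynomial ℤ).map (Int.castRingHom ℚ)) := by
  have hAB' : Cond A B := by
    unfold Cond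
    simpa [Prod.ext_iff] using hAB
  have hBne : B ≠ 0 := by rintro rfl; norm_num at hB2
  have hmon : (X ^ 4 + C A * X ^ 3 + C B : ℤ[X]).Monic := by monicity!
  have hdeg : (X ^ 4 + C A * X ^ 3 + C B : ℤ[X]).natDegree = 4 := by compute_degree!
  rw [show Int.castRingHom ℚ = algebraMap ℤ ℚ from rfl,
    ← hmon.irreducible_iff_irreducible_map_fraction_map]
  constructor
  · intro hu
    have := natDegree_eq_zero_of_isUnit hu
    omega
  · rintro p q hpq
    by_contra hcon
    push_neg at hcon
    obtain ⟨hpu, hqu⟩ := hcon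
    have hp0 : p ≠ 0 := by rintro rfl; rw [zero_mul] at hpq; exact hmon.ne_zero hpq
    have hq0 : q ≠ 0 := by rintro rfl; rw [mul_zero] at hpq; exact hmon.ne_zero hpq
    have hl : p.leadingCoeff * q.leadingCoeff = 1 := by
      rw [← leadingCoeff_mul, ← hpq]; exact hmon
    have hdd : p.natDegree + q.natDegree = 4 := by
      rw [← natDegree_mul hp0 hq0, ← hpq, hdeg]
    have hp1 : p.natDegree ≠ 0 := by
      intro h0
      obtain ⟨c, rfl⟩ := natDegree_eq_zero.mp h0
      exact hpu (isUnit_C.mpr (IsUnit.of_mul_eq_one _ (by simpa only [leadingCoeff_C] using hl)))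
    have hq1 : q.natDegree ≠ 0 := by
      intro h0
      obtain ⟨c, rfl⟩ := natDegree_eq_zero.mp h0
      exact hqu (isUnit_C.mpr (IsUnit.of_mul_eq_one _ (by simpa only [leadingCoeff_C, mul_comm] using hl)))
    rcases Int.isUnit_iff.mp (IsUnit.of_mul_eq_one _ hl) with h1 | h1
    · have hq2 : q.leadingCoeff = 1 := by rw [h1, one_mul] at hl; exact hl
      exact factor_aux A B hB hBne hAB' p q h1 hq2 hpq hdd hp1 hq1
    · have hq2 : q.leadingCoeff = -1 := by rw [h1] at hl; linarith
      have hpm : (-p).Monic := by unfold Monic; rw [leadingCoeff_neg, h1]; ring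
      have hqm : (-q).Monic := by unfold Monic; rw [leadingCoeff_neg, hq2]; ring
      exact factor_aux A B hB hBne hAB' (-p) (-q) hpm hqm (by rw [hpq]; ring)
        (by simpa using hdd) (by simpa using hp1) (by simpa using hq1)
end

section
/- Let F(x) = x^2 + A x + B ∈ ℤ[x] with B squarefree, |B| ≥ 2, and (A mod 4, B mod 4) ∈ {(0,1),(0,2),(1,1),(1,3),(2,2),(2,3),(3,1),(3,3)}. Then for every prime p and every integer n ≥ 0, F(x^{p^n}) is irreducible over ℚ. -/
open Polynomial IntermediateField Module

private lemma key_int {B : ℤ} (hB : Squarefree B) (hB2 : 2 ≤ |B|) {p : ℕ} (hp : p.Prime)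
    (q : ℚ) (h : q ^ p = (B : ℚ) ∨ q ^ p = -(B : ℚ)) : False := by
  obtain ⟨D, hD, hDB⟩ : ∃ D : ℤ, q ^ p = (D : ℚ) ∧ (D = B ∨ D = -B) := by
    rcases h with h | h
    · exact ⟨B, h, Or.inl rfl⟩
    · exact ⟨-B, by push_cast; rw [h], Or.inr rfl⟩
  have hint : IsIntegral ℤ q := by
    refine ⟨X ^ p - C D, monic_X_pow_sub_C _ hp.ne_zero, ?_⟩
    rw [eval₂_sub, eval₂_pow, eval₂_X, eval₂_C]
    simp only [algebraMap_int_eq, eq_intCast]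
    rw [hD, sub_self]
  obtain ⟨m, hm⟩ := IsIntegrallyClosed.isIntegral_iff.mp hint
  have hmD : m ^ p = D := by
    have : ((m : ℚ)) ^ p = (D : ℚ) := by
      rw [show ((m : ℚ)) = q from by rw [← hm]; simp, hD]
    exact_mod_cast this
  have hdvd : m * m ∣ B := by
    have h1 : m * m ∣ D := by
      rw [← hmD, ← pow_two]
      exact pow_dvd_pow m hp.two_le
    rcases hDB with rfl | rfl
    · exact h1
    · exact (dvd_neg).mp h1
  have hu : IsUnit m := hB m hdvd
  have hm1 : |m| = 1 := by
    rcases Int.isUnit_iff.mp hu with rfl | rfl <;> decide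
  have hDabs : |D| = 1 := by
    rw [← hmD, abs_pow, hm1, one_pow]
  have hBabs : |B| = 1 := by
    rcases hDB with rfl | rfl
    · exact hDabs
    · rw [abs_neg] at hDabs; exact hDabs
  omega

private lemma lemA {B : ℤ} (hB : Squarefree B) (hB2 : 2 ≤ |B|) {p : ℕ} (hp : p.Prime) :
    ∀ (n : ℕ) (L : Type) (_ : Field L) (_ : Algebra ℚ L) (_ : FiniteDimensional ℚ L) (γ : L),
      (Algebra.norm ℚ γ = (B : ℚ) ∨ Algebra.norm ℚ γ = -(B : ℚ)) →
      Irreducible (X ^ p ^ n - C γ) := by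
  intro n
  induction n with
  | zero => intro L _ _ _ γ _; simpa using irreducible_X_sub_C γ
  | succ n IH =>
    intro L _ _ _ γ hγ
    have hstep : ∀ b : L, b ^ p ≠ γ := by
      intro b hb
      refine key_int hB hB2 hp (Algebra.norm ℚ b) ?_
      rw [← map_pow, hb]; exact hγ
    have hbase : Irreducible (X ^ p - C γ) := X_pow_sub_C_irreducible_of_prime hp hstep
    rw [pow_succ]
    refine X_pow_mul_sub_C_irreducible hbase ?_
    intro E _ _ x hx
    have hxi : IsIntegral L x := by
      by_contra h
      exact X_pow_sub_C_ne_zero hp.pos γ (hx ▸ minpoly.eq_zero h)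
    haveI : FiniteDimensional L L⟮x⟯ := adjoin.finiteDimensional hxi
    haveI : CharZero L := charZero_of_injective_algebraMap (algebraMap ℚ L).injective
    haveI : IsScalarTower ℚ L L⟮x⟯ := IsScalarTower.of_algebraMap_eq' (Subsingleton.elim _ _)
    haveI : FiniteDimensional ℚ L⟮x⟯ := FiniteDimensional.trans ℚ L L⟮x⟯
    haveI : Algebra.IsAlgebraic ℚ L⟮x⟯ := Algebra.IsAlgebraic.of_finite _ _
    haveI : Algebra.IsSeparable ℚ L⟮x⟯ :=
      Algebra.IsAlgebraic.isSeparable_of_perfectField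
    refine IH (L⟮x⟯) inferInstance inferInstance inferInstance (AdjoinSimple.gen L x) ?_
    have h1 : Algebra.norm L (AdjoinSimple.gen L x) = (-1 : L) ^ p * (-γ) := by
      rw [← adjoin.powerBasis_gen hxi, Algebra.PowerBasis.norm_gen_eq_coeff_zero_minpoly]
      simp only [adjoin.powerBasis_dim, adjoin.powerBasis_gen, minpoly_gen, hx,
        natDegree_X_pow_sub_C, coeff_sub, coeff_X_pow, coeff_C_zero]
      rw [if_neg (Ne.symm hp.ne_zero), zero_sub]
    have h2 : Algebra.norm ℚ (AdjoinSimple.gen L x) =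
        (-1 : ℚ) ^ (finrank ℚ L * (p + 1)) * Algebra.norm ℚ γ := by
      rw [← Algebra.norm_norm (R := ℚ) (S := L), h1]
      have hm1 : (-1 : L) = algebraMap ℚ L (-1) := by simp
      rw [show (-1 : L) ^ p * (-γ) = (-1 : L) ^ (p + 1) * γ from by ring,
        map_mul, map_pow, hm1, Algebra.norm_algebraMap, ← pow_mul]
    rcases neg_one_pow_eq_or ℚ (finrank ℚ L * (p + 1)) with hs | hs <;>
      rcases hγ with hg | hg <;> rw [hg, hs] at h2
    · exact Or.inl (by rw [h2]; ring)
    · exact Or.inr (by rw [h2]; ring)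
    · exact Or.inr (by rw [h2]; ring)
    · exact Or.inl (by rw [h2]; ring)

private lemma mod4 : ∀ x a b : ZMod 4,
    ((a = 0 ∧ b = 1) ∨ (a = 0 ∧ b = 2) ∨ (a = 1 ∧ b = 1) ∨ (a = 1 ∧ b = 3) ∨
     (a = 2 ∧ b = 2) ∨ (a = 2 ∧ b = 3) ∨ (a = 3 ∧ b = 1) ∨ (a = 3 ∧ b = 3)) →
    x ^ 2 + a * x + b ≠ 0 := by decide

theorem stmt_7 (A B : ℤ) (hB : Squarefree B) (hB2 : 2 ≤ |B|)
    (hAB : (A % 4, B % 4) ∈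
      ({(0,1),(0,2),(1,1),(1,3),(2,2),(2,3),(3,1),(3,3)} : Set (ℤ × ℤ)))
    (p : ℕ) (hp : p.Prime) (n : ℕ) :
    Irreducible (((X ^ 2 + C A * X + C B : Polynomial ℤ).comp (X ^ p ^ n)).map
      (Int.castRingHom ℚ)) := by
  classical
  -- no integer root mod 4
  have hnoroot : ∀ r : ℤ, r ^ 2 + A * r + B ≠ 0 := by
    intro r hr
    have h0 : ((r : ZMod 4)) ^ 2 + (A : ZMod 4) * (r : ZMod 4) + (B : ZMod 4) = 0 := by
      have := congrArg (Int.cast : ℤ → ZMod 4) hr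
      push_cast at this
      simpa using this
    refine mod4 (r : ZMod 4) (A : ZMod 4) (B : ZMod 4) ?_ h0
    have castA : (A : ZMod 4) = ((A % 4 : ℤ) : ZMod 4) := (ZMod.intCast_mod A 4).symm
    have castB : (B : ZMod 4) = ((B % 4 : ℤ) : ZMod 4) := (ZMod.intCast_mod B 4).symm
    simp only [Set.mem_insert_iff, Set.mem_singleton_iff, Prod.mk.injEq] at hAB
    rcases hAB with ⟨hA, hB'⟩ | ⟨hA, hB'⟩ | ⟨hA, hB'⟩ | ⟨hA, hB'⟩ | ⟨hA, hB'⟩ | ⟨hA, hB'⟩ |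
      ⟨hA, hB'⟩ | ⟨hA, hB'⟩ <;>
      rw [castA, castB, hA, hB'] <;> norm_num
  set f : ℚ[X] := (X ^ 2 + C A * X + C B : Polynomial ℤ).map (Int.castRingHom ℚ) with hfdef
  have hfeq : f = X ^ 2 + C (A : ℚ) * X + C (B : ℚ) := by
    simp [hfdef, Polynomial.map_add, Polynomial.map_mul, Polynomial.map_pow]
  have hfm : f.Monic := by
    rw [hfeq, add_assoc]
    exact monic_X_pow_add (n := 2) (lt_of_le_of_lt degree_linear_le (by norm_num))
  have hdeg : f.natDegree = 2 := by
    rw [hfeq, show (X ^ 2 + C (A : ℚ) * X + C (B : ℚ))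
      = C (1 : ℚ) * X ^ 2 + C (A : ℚ) * X + C (B : ℚ) from by rw [map_one, one_mul]]
    exact natDegree_quadratic one_ne_zero
  -- f is irreducible over ℚ
  have hfirr : Irreducible f := by
    rw [irreducible_iff_roots_eq_zero_of_degree_le_three (by rw [hdeg]) (by rw [hdeg]; norm_num)]
    rw [Multiset.eq_zero_iff_forall_notMem]
    intro q hq
    have hroot : q ^ 2 + (A : ℚ) * q + (B : ℚ) = 0 := by
      have := (mem_roots (p := f) hfm.ne_zero).mp hq
      rw [hfeq] at this
      simpa [IsRoot.def] using this
    have hqint : IsIntegral ℤ q := by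
      refine ⟨X ^ 2 + C A * X + C B, ?_, ?_⟩
      · have : (X ^ 2 + C A * X + C B : Polynomial ℤ) = X ^ 2 + (C A * X + C B) := by ring
        rw [this]
        exact monic_X_pow_add (n := 2) (lt_of_le_of_lt degree_linear_le (by norm_num))
      · rw [eval₂_add, eval₂_add, eval₂_mul, eval₂_pow, eval₂_X, eval₂_C, eval₂_C]
        simp only [algebraMap_int_eq, eq_intCast]
        exact hroot
    obtain ⟨r, hr⟩ := IsIntegrallyClosed.isIntegral_iff.mp hqint
    refine hnoroot r ?_
    have : ((r : ℚ)) ^ 2 + (A : ℚ) * (r : ℚ) + (B : ℚ) = 0 := by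
      rw [show ((r : ℚ)) = q from by rw [← hr]; simp]
      exact hroot
    exact_mod_cast this
  have hmap : ((X ^ 2 + C A * X + C B : Polynomial ℤ).comp (X ^ p ^ n)).map
      (Int.castRingHom ℚ) = f.comp (X ^ p ^ n) := by
    rw [Polynomial.map_comp, Polynomial.map_pow, map_X]
  rw [hmap]
  refine Polynomial.irreducible_comp hfm (monic_X_pow _) hfirr ?_
  intro E _ _ x hx
  have hxi : IsIntegral ℚ x := by
    by_contra h
    exact hfm.ne_zero (hx ▸ minpoly.eq_zero h)
  rw [Polynomial.map_pow, map_X]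
  letI : Algebra ℚ ℚ⟮x⟯ := ℚ⟮x⟯.algebra'
  have hnorm := Algebra.PowerBasis.norm_gen_eq_coeff_zero_minpoly (adjoin.powerBasis hxi)
  rw [adjoin.powerBasis_gen, adjoin.powerBasis_dim, minpoly_gen, hx, hdeg, hfeq] at hnorm
  refine lemA hB hB2 hp n (ℚ⟮x⟯) inferInstance inferInstance
    (adjoin.finiteDimensional hxi) (AdjoinSimple.gen ℚ x) (Or.inl ?_)
  rw [hnorm]
  simp [coeff_X_pow]
end

section
/- Let m ≥ 3 and let p ≥ 3 be prime. Let F(x) = x^m + A x^{m-1} + B with A = 4p^2 u + 1 and B = 2pt + p for integers u, t such that B is squarefree with |B| ≥ 2. If F(x) is irreducible over ℚ, then F(x^{p^n}) is irreducible over ℚ for all integers n ≥ 0. -/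
open Polynomial IntermediateField

lemma capelli_step (p : ℕ) (hp : p.Prime) (f₀ : Polynomial ℤ) (hmon : f₀.Monic)
    (hirr : Irreducible (f₀.map (Int.castRingHom ℚ)))
    (hne : ∀ z : ℤ, z ^ p ≠ f₀.coeff 0 ∧ z ^ p ≠ -(f₀.coeff 0)) :
    Irreducible ((f₀.map (Int.castRingHom ℚ)).comp (X ^ p)) := by
  set f : Polynomial ℚ := f₀.map (Int.castRingHom ℚ) with hf
  have hfm : f.Monic := hmon.map _
  refine Polynomial.irreducible_comp hfm (monic_X_pow p) hirr ?_
  intro E _ _ x hx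
  rw [Polynomial.map_pow, map_X]
  apply X_pow_sub_C_irreducible_of_prime hp
  intro b hb
  have hxi : IsIntegral ℚ x := ⟨f, hfm, by rw [← hx]; exact minpoly.aeval ℚ x⟩
  letI : Algebra ℚ (↥ℚ⟮x⟯) := ℚ⟮x⟯.algebra'
  haveI := IntermediateField.adjoin.finiteDimensional hxi
  set g := IntermediateField.AdjoinSimple.gen ℚ x with hg
  have hming : minpoly ℚ g = f := by
    rw [hg, IntermediateField.minpoly_gen, hx]
  -- norm of g
  have hnorm : Algebra.norm ℚ g = (-1) ^ (minpoly ℚ x).natDegree * (f₀.coeff 0 : ℚ) := by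
    have h := Algebra.PowerBasis.norm_gen_eq_coeff_zero_minpoly
      (IntermediateField.adjoin.powerBasis hxi)
    rw [IntermediateField.adjoin.powerBasis_gen, IntermediateField.adjoin.powerBasis_dim] at h
    rw [h, ← hg, hming]
    simp [hf]
  -- g is integral over ℤ
  have hgint : IsIntegral ℤ g := by
    refine ⟨f₀, hmon, ?_⟩
    have h : (Polynomial.aeval g) f = 0 := by rw [← hming]; exact minpoly.aeval ℚ g
    rw [hf, show Int.castRingHom ℚ = algebraMap ℤ ℚ from rfl,
      Polynomial.aeval_map_algebraMap] at h
    exact h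
  have hbint : IsIntegral ℤ b := IsIntegral.of_pow hp.pos (hb ▸ hgint)
  have hNint : IsIntegral ℤ (Algebra.norm ℚ b) := Algebra.isIntegral_norm ℚ hbint
  obtain ⟨z, hz⟩ := IsIntegrallyClosed.isIntegral_iff.mp hNint
  have hNb : (Algebra.norm ℚ b) ^ p = (-1) ^ (minpoly ℚ x).natDegree * (f₀.coeff 0 : ℚ) := by
    rw [← hnorm, ← hb, map_pow]
  rw [← hz] at hNb
  rcases Nat.even_or_odd (minpoly ℚ x).natDegree with he | ho
  · rw [he.neg_one_pow, one_mul] at hNb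
    have h2 : ((z ^ p : ℤ) : ℚ) = ((f₀.coeff 0 : ℤ) : ℚ) := by push_cast; exact hNb
    exact (hne z).1 (Int.cast_injective h2)
  · rw [ho.neg_one_pow, neg_one_mul] at hNb
    have h2 : ((z ^ p : ℤ) : ℚ) = ((-f₀.coeff 0 : ℤ) : ℚ) := by push_cast; exact hNb
    exact (hne z).2 (Int.cast_injective h2)

theorem stmt_14 (m : ℕ) (hm : 3 ≤ m) (p : ℕ) (hp : p.Prime) (hp3 : 3 ≤ p)
    (u t : ℤ) (A B : ℤ)
    (hA : A = 4 * (p : ℤ) ^ 2 * u + 1) (hB : B = 2 * p * t + p)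
    (hBsf : Squarefree B) (hB2 : 2 ≤ |B|)
    (hirr : Irreducible ((X ^ m + C A * X ^ (m - 1) + C B : Polynomial ℤ).map
      (Int.castRingHom ℚ))) (n : ℕ) :
    Irreducible (((X ^ m + C A * X ^ (m - 1) + C B : Polynomial ℤ).comp (X ^ p ^ n)).map
      (Int.castRingHom ℚ)) := by
  set f₀ : Polynomial ℤ := X ^ m + C A * X ^ (m - 1) + C B with hf₀
  have hm0 : m ≠ 0 := by omega
  have hm1 : m - 1 ≠ 0 := by omega
  -- monicity of f₀
  have hmon : f₀.Monic := by
    have h1 : (C A * X ^ (m - 1) + C B : Polynomial ℤ).degree < (X ^ m : Polynomial ℤ).degree := by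
      rw [degree_X_pow]
      refine lt_of_le_of_lt (degree_add_le _ _) (max_lt ?_ ?_)
      · refine lt_of_le_of_lt (degree_mul_le _ _) ?_
        rw [degree_X_pow]
        calc (C A).degree + ((m : ℕ) - 1 : ℕ) ≤ 0 + ((m : ℕ) - 1 : ℕ) :=
              add_le_add_left (degree_C_le) _
          _ < (m : WithBot ℕ) := by
              rw [zero_add]
              exact_mod_cast Nat.sub_lt (show 0 < m by omega) one_pos
      · exact lt_of_le_of_lt degree_C_le (by exact_mod_cast Nat.pos_of_ne_zero hm0)
    have := (monic_X_pow m (R := ℤ)).add_of_left h1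
    rwa [← add_assoc] at this
  -- constant coefficient
  have hcoeff : f₀.coeff 0 = B := by
    simp [hf₀, coeff_X_pow, coeff_C, (show 0 ≠ m by omega), (show 0 ≠ m - 1 by omega)]
  -- B is not a p-th power up to sign
  have hBne : ∀ z : ℤ, z ^ p ≠ B ∧ z ^ p ≠ -B := by
    have hkey : ∀ z : ℤ, z ^ p ≠ B := by
      intro z hzB
      have hdvd : z * z ∣ B := by
        rw [← hzB]
        have : z * z ∣ z ^ p := by
          rw [show p = 2 + (p - 2) by omega, pow_add, pow_two]
          exact Dvd.intro _ rfl
        exact this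
      have hu := hBsf z hdvd
      have hz1 : z = 1 ∨ z = -1 := Int.isUnit_iff.mp hu
      have : |B| = 1 := by
        rcases hz1 with rfl | rfl <;> rw [← hzB] <;>
          simp [abs_pow]
      omega
    intro z
    refine ⟨hkey z, fun h => hkey (-z) ?_⟩
    have hodd : Odd p := hp.odd_of_ne_two (by omega)
    rw [hodd.neg_pow, h, neg_neg]
  -- induction
  induction n with
  | zero =>
    simpa [pow_zero, pow_one] using hirr
  | succ k ih =>
    have hcomp : f₀.comp (X ^ p ^ (k + 1)) = (f₀.comp (X ^ p ^ k)).comp (X ^ p) := by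
      rw [pow_succ', comp_assoc, X_pow_comp, ← pow_mul]
    have hmon' : (f₀.comp (X ^ p ^ k)).Monic :=
      hmon.comp (monic_X_pow _) (by simpa [natDegree_X_pow] using pow_ne_zero k hp.ne_zero)
    have hc0 : (f₀.comp (X ^ p ^ k)).coeff 0 = B := by
      rw [← hcoeff]
      rw [coeff_zero_eq_eval_zero, coeff_zero_eq_eval_zero, eval_comp]
      simp [zero_pow (pow_ne_zero k hp.ne_zero)]
    have := capelli_step p hp (f₀.comp (X ^ p ^ k)) hmon' ?_ ?_
    · rw [hcomp, Polynomial.map_comp, Polynomial.map_pow, map_X]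
      exact this
    · exact ih
    · intro z
      rw [hc0]
      exact hBne z
end

section
/- Let ℓ be a prime and let G(t) = ∏_{i=1}^{k} (a_i t + b_i) ∈ ℤ[t] be a product of k pairwise distinct linear factors with gcd(a_i, b_i) = 1 for each i. If k < 2(ℓ - 1), then there exists z ∈ (ℤ/ℓ^2 ℤ)^* with G(z) ≢ 0 (mod ℓ^2). -/
open Finset

/-- If `c` is not divisible by the prime `ℓ`, then `c` is a unit mod `ℓ^2`. -/
lemma aux_isUnit_zmod_sq (ℓ : ℕ) (hℓ : ℓ.Prime) (c : ℤ) (h : ¬ (ℓ : ℤ) ∣ c) :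
    IsUnit ((c : ZMod (ℓ ^ 2))) := by
  have hp : Prime (ℓ : ℤ) := Nat.prime_iff_prime_int.mp hℓ
  have hcop : IsCoprime ((ℓ : ℤ)) c := (Prime.coprime_iff_not_dvd hp).mpr h
  have hcop2 : IsCoprime ((ℓ : ℤ) ^ 2) c := hcop.pow_left
  have := hcop2.map (Int.castRingHom (ZMod (ℓ ^ 2)))
  simp only [map_pow, map_natCast] at this
  have hz : ((ℓ : ZMod (ℓ ^ 2)) : ZMod (ℓ ^ 2)) ^ 2 = 0 := by
    have : ((ℓ ^ 2 : ℕ) : ZMod (ℓ ^ 2)) = 0 := ZMod.natCast_self _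
    push_cast at this
    exact this
  rw [hz] at this
  simpa using (isCoprime_zero_left.mp this)

theorem stmt_16 (ℓ : ℕ) (hℓ : ℓ.Prime) (k : ℕ) (a b : Fin k → ℤ)
    (hcop : ∀ i, IsCoprime (a i) (b i))
    (hdist : ∀ i j, i ≠ j → (a i, b i) ≠ (a j, b j))
    (hk : k < 2 * (ℓ - 1)) :
    ∃ z : (ZMod (ℓ ^ 2))ˣ,
      (∏ i, ((a i : ZMod (ℓ ^ 2)) * (z : ZMod (ℓ ^ 2)) + (b i : ZMod (ℓ ^ 2)))) ≠ 0 := by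
  haveI : Fact ℓ.Prime := ⟨hℓ⟩
  haveI : NeZero (ℓ ^ 2) := ⟨pow_ne_zero 2 hℓ.ne_zero⟩
  haveI : Fact (1 < ℓ ^ 2) := ⟨one_lt_pow₀ hℓ.one_lt two_ne_zero⟩
  -- no index has both a i and b i divisible by ℓ
  have hcop' : ∀ i, ¬ ((a i : ZMod ℓ) = 0 ∧ (b i : ZMod ℓ) = 0) := by
    intro i ⟨ha, hb⟩
    have := (hcop i).map (Int.castRingHom (ZMod ℓ))
    simp only [Int.coe_castRingHom] at this
    rw [ha, hb] at this
    rcases isCoprime_zero_left.mp this with hu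
    exact hu.ne_zero rfl
  -- counting function
  classical
  set N : ZMod ℓ → ℕ := fun x => (univ.filter (fun i => (a i : ZMod ℓ) * x + b i = 0)).card with hN
  -- each fiber over ZMod ℓ has at most one solution per index, so the sum is ≤ k
  have hfiber : ∀ i : Fin k, ((univ.erase (0 : ZMod ℓ)).filter
      (fun x => (a i : ZMod ℓ) * x + b i = 0)).card ≤ 1 := by
    intro i
    apply Finset.card_le_one.mpr
    intro x hx y hy
    simp only [mem_filter] at hx hy
    by_cases ha : (a i : ZMod ℓ) = 0
    · exfalso
      apply hcop' i
      refine ⟨ha, ?_⟩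
      have := hx.2; rwa [ha, zero_mul, zero_add] at this
    · have : (a i : ZMod ℓ) * x = (a i : ZMod ℓ) * y := by
        have := hx.2.trans hy.2.symm
        linear_combination this
      exact mul_left_cancel₀ ha this
  have hsum : ∑ x ∈ univ.erase (0 : ZMod ℓ), N x ≤ k := by
    have : ∑ x ∈ univ.erase (0 : ZMod ℓ), N x
        = ∑ i : Fin k, ((univ.erase (0 : ZMod ℓ)).filter
          (fun x => (a i : ZMod ℓ) * x + b i = 0)).card := by
      simp only [hN, Finset.card_filter]
      rw [Finset.sum_comm]
    rw [this]
    calc ∑ i : Fin k, _ ≤ ∑ _i : Fin k, 1 := Finset.sum_le_sum (fun i _ => hfiber i)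
    _ = k := by simp
  -- there is a nonzero residue x mod ℓ with at most one vanishing factor
  have hcard : (univ.erase (0 : ZMod ℓ)).card = ℓ - 1 := by
    rw [Finset.card_erase_of_mem (mem_univ _), Finset.card_univ, ZMod.card]
  obtain ⟨x, hxmem, hx1⟩ : ∃ x ∈ univ.erase (0 : ZMod ℓ), N x ≤ 1 := by
    by_contra h
    push_neg at h
    have : 2 * (ℓ - 1) ≤ ∑ x ∈ univ.erase (0 : ZMod ℓ), N x := by
      calc 2 * (ℓ - 1) = ∑ _x ∈ univ.erase (0 : ZMod ℓ), 2 := by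
            rw [Finset.sum_const, hcard, smul_eq_mul, mul_comm]
      _ ≤ _ := Finset.sum_le_sum (fun x hx => h x hx)
    omega
  have hx0 : x ≠ 0 := (Finset.mem_erase.mp hxmem).1
  set n : ℤ := (x.val : ℤ) with hn
  have hnx : ((n : ZMod ℓ)) = x := by
    rw [hn]; push_cast; rw [ZMod.natCast_val, ZMod.cast_id]
  -- general construction: given m ≡ x mod ℓ, factors with nonvanishing reduction are units
  have key : ∀ (m : ℤ), ((m : ZMod ℓ) = x) → ∀ i : Fin k, (a i : ZMod ℓ) * x + b i ≠ 0 →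
      IsUnit ((a i : ZMod (ℓ ^ 2)) * (m : ZMod (ℓ ^ 2)) + (b i : ZMod (ℓ ^ 2))) := by
    intro m hm i hi
    have h1 : (a i : ZMod (ℓ ^ 2)) * (m : ZMod (ℓ ^ 2)) + (b i : ZMod (ℓ ^ 2))
        = ((a i * m + b i : ℤ) : ZMod (ℓ ^ 2)) := by push_cast; ring
    rw [h1]
    apply aux_isUnit_zmod_sq ℓ hℓ
    rw [← ZMod.intCast_zmod_eq_zero_iff_dvd] at *
    intro hdvd
    apply hi
    rw [← hm]
    push_cast at hdvd ⊢
    linear_combination hdvd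
  have keyunit : ∀ (m : ℤ), ((m : ZMod ℓ) = x) → IsUnit ((m : ZMod (ℓ ^ 2))) := by
    intro m hm
    apply aux_isUnit_zmod_sq ℓ hℓ
    rw [← ZMod.intCast_zmod_eq_zero_iff_dvd]
    rw [hm]; exact hx0
  by_cases hfull : ∃ i₀ : Fin k, (a i₀ : ZMod ℓ) * x + b i₀ = 0
  · -- exactly one vanishing factor i₀
    obtain ⟨i₀, hi₀⟩ := hfull
    have huniq : ∀ i : Fin k, (a i : ZMod ℓ) * x + b i = 0 → i = i₀ := by
      intro i hi
      exact Finset.card_le_one.mp hx1 i (by simp [hi]) i₀ (by simp [hi₀])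
    have ha0 : (a i₀ : ZMod ℓ) ≠ 0 := by
      intro h
      exact hcop' i₀ ⟨h, by rwa [h, zero_mul, zero_add] at hi₀⟩
    have hadvd : ¬ (ℓ : ℤ) ∣ a i₀ := by
      rwa [← ZMod.intCast_zmod_eq_zero_iff_dvd] at *
    have hdvd : (ℓ : ℤ) ∣ a i₀ * n + b i₀ := by
      rw [← ZMod.intCast_zmod_eq_zero_iff_dvd]
      push_cast
      rw [hnx]; exact hi₀
    obtain ⟨c, hc⟩ := hdvd
    -- choose t ∈ {0,1} with ℓ ∤ c + a i₀ * t
    obtain ⟨t, ht⟩ : ∃ t : ℤ, ¬ (ℓ : ℤ) ∣ (c + a i₀ * t) := by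
      by_cases h : (ℓ : ℤ) ∣ c
      · exact ⟨1, fun hd => hadvd (by
          have := dvd_sub hd h
          simpa using this)⟩
      · exact ⟨0, by simpa using h⟩
    set m : ℤ := n + ℓ * t with hm
    have hmx : ((m : ZMod ℓ)) = x := by
      rw [hm]; push_cast; rw [hnx, ZMod.natCast_self]; ring
    have hz := keyunit m hmx
    refine ⟨hz.unit, ?_⟩
    rw [IsUnit.unit_spec]
    -- split off the factor i₀
    rw [← Finset.mul_prod_erase univ _ (Finset.mem_univ i₀)]
    have hrest : IsUnit (∏ i ∈ univ.erase i₀,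
        ((a i : ZMod (ℓ ^ 2)) * (m : ZMod (ℓ ^ 2)) + (b i : ZMod (ℓ ^ 2)))) := by
      apply Finset.prod_induction _ IsUnit (fun _ _ => IsUnit.mul) isUnit_one
      intro i hi
      apply key m hmx i
      intro h0
      exact (Finset.mem_erase.mp hi).1 (huniq i h0)
    intro hprod
    rw [hrest.mul_left_eq_zero] at hprod
    -- factor at i₀ equals ℓ * (c + a i₀ * t), not divisible by ℓ²
    have heq : (a i₀ : ZMod (ℓ ^ 2)) * (m : ZMod (ℓ ^ 2)) + (b i₀ : ZMod (ℓ ^ 2))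
        = (((ℓ : ℤ) * (c + a i₀ * t) : ℤ) : ZMod (ℓ ^ 2)) := by
      push_cast
      have : (a i₀ : ℤ) * m + b i₀ = (ℓ : ℤ) * (c + a i₀ * t) := by
        rw [hm]; linear_combination hc
      have := congrArg (fun y : ℤ => (y : ZMod (ℓ ^ 2))) this
      push_cast at this
      linear_combination this
    rw [heq] at hprod
    rw [ZMod.intCast_zmod_eq_zero_iff_dvd] at hprod
    have hd := hprod
    push_cast at hd
    rw [pow_two] at hd
    have := (mul_dvd_mul_iff_left (by exact_mod_cast hℓ.ne_zero : (ℓ : ℤ) ≠ 0)).mp hd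
    exact ht this
  · -- no vanishing factor: every factor is a unit
    push_neg at hfull
    have hz := keyunit n hnx
    refine ⟨hz.unit, ?_⟩
    rw [IsUnit.unit_spec]
    have : IsUnit (∏ i, ((a i : ZMod (ℓ ^ 2)) * (n : ZMod (ℓ ^ 2)) + (b i : ZMod (ℓ ^ 2)))) := by
      apply Finset.prod_induction _ IsUnit (fun _ _ => IsUnit.mul) isUnit_one
      intro i _
      exact key n hnx i (hfull i)
    exact this.ne_zero
end

section
/- Let c ≥ 2 be an integer and α an algebraic number. Then x^c - α is reducible over ℚ(α) if and only if either there is a prime p dividing c with α = β^p for some β ∈ ℚ(α), or 4 divides c and α = -4β^4 for some β ∈ ℚ(α). -/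
open Polynomial IntermediateField

universe u

section Capelli

/-- Uniqueness of coordinates in a quadratic extension. -/
lemma quad_coords_eq_zero {K : Type u} [Field K] {F : Type*} [Field F] [Algebra K F]
    {a : K} {g : F} (hmin : minpoly K g = X ^ 2 - C a) (c d : K)
    (h : algebraMap K F c + algebraMap K F d * g = 0) : c = 0 ∧ d = 0 := by
  by_cases hd : d = 0
  · subst hd
    simp only [map_zero, zero_mul, add_zero] at h
    exact ⟨(algebraMap K F).injective (by simpa using h), rfl⟩
  · exfalso
    have hd' : (algebraMap K F d) ≠ 0 := by
      simpa using fun h' => hd ((algebraMap K F).injective (by simpa using h'))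
    have hg : g = algebraMap K F (-c / d) := by
      rw [map_div₀, map_neg, eq_div_iff hd']
      linear_combination h
    have h1 : minpoly K g = X - C (-c / d) := by rw [hg, minpoly.eq_X_sub_C]
    have := congrArg natDegree (hmin.symm.trans h1)
    rw [natDegree_X_pow_sub_C, natDegree_X_sub_C] at this
    omega

/-- Core computation: if `g` is a square root of `a` generating a quadratic extension and
`a` is not of the form `-4 b ^ 4`, then neither `g` nor `-g` is a square in `K(g)`. -/
lemma quad_no_sqrt {K : Type u} [Field K] [CharZero K] {F : Type*} [Field F] [Algebra K F]
    {a : K} {g : F} (hmin : minpoly K g = X ^ 2 - C a)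
    (hspan : ∀ z : F, ∃ c d : K, z = algebraMap K F c + algebraMap K F d * g)
    (h4 : ∀ b : K, a ≠ -4 * b ^ 4) (γ : F) (s : K) (hs : s ^ 2 = 1) :
    γ ^ 2 ≠ algebraMap K F s * g := by
  intro hγ
  have hint : IsIntegral K g := by
    by_contra h
    rw [minpoly.eq_zero h] at hmin
    exact (monic_X_pow_sub_C a (by norm_num)).ne_zero hmin.symm
  have hg2 : g ^ 2 = algebraMap K F a := by
    have := minpoly.aeval K g
    rw [hmin] at this
    simpa [sub_eq_zero] using this
  obtain ⟨c, d, rfl⟩ := hspan γ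
  have key : algebraMap K F (c ^ 2 + d ^ 2 * a) + algebraMap K F (2 * c * d - s) * g = 0 := by
    push_cast [map_add, map_mul, map_pow, map_sub, map_ofNat]
    linear_combination hγ - (algebraMap K F d) ^ 2 * hg2
  obtain ⟨h1, h2⟩ := quad_coords_eq_zero hmin _ _ key
  have hd : d ≠ 0 := by
    rintro rfl
    rw [mul_zero, zero_sub, neg_eq_zero] at h2
    rw [h2] at hs
    simp at hs
  apply h4 (1 / (2 * d))
  have hcd : 4 * c ^ 2 * d ^ 2 = 1 := by linear_combination (2 * c * d + s) * h2 + hs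
  have hgoal : a * (4 * d ^ 4) = -1 := by linear_combination 4 * d ^ 2 * h1 - hcd
  field_simp
  first
  | linear_combination 4 * hgoal
  | linear_combination -4 * hgoal
  | linear_combination 16 * d ^ 4 * hgoal

/-- Elements of `K⟮x⟯` when `x` has a degree-2 minimal polynomial. -/
lemma adjoin_quad_span {K : Type u} [Field K] {E : Type u} [Field E] [Algebra K E]
    {x : E} (hint : IsIntegral K x) (hdeg : (minpoly K x).natDegree = 2)
    (z : K⟮x⟯) : ∃ c d : K, z = algebraMap K K⟮x⟯ c +
      algebraMap K K⟮x⟯ d * IntermediateField.AdjoinSimple.gen K x := by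
  obtain ⟨f, hf, rfl⟩ := (IntermediateField.adjoin.powerBasis hint).exists_eq_aeval z
  rw [IntermediateField.adjoin.powerBasis_dim, hdeg] at hf
  refine ⟨f.coeff 0, f.coeff 1, ?_⟩
  have hf1 : f = C (f.coeff 1) * X + C (f.coeff 0) :=
    f.eq_X_add_C_of_natDegree_le_one (by omega)
  conv_lhs => rw [hf1]
  simp only [map_add, map_mul, aeval_C, aeval_X, IntermediateField.adjoin.powerBasis_gen]
  ring

/-- Irreducibility of `X ^ 2 ^ k - a`. -/
lemma X_pow_two_pow_sub_C_irreducible {k : ℕ} (hk : 1 ≤ k) :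
    ∀ {K : Type u} [Field K] [CharZero K] (a : K), (∀ b : K, b ^ 2 ≠ a) →
      (2 ≤ k → ∀ b : K, a ≠ -4 * b ^ 4) → Irreducible (X ^ (2 ^ k) - C a) := by
  induction k with
  | zero => omega
  | succ k IH =>
    intro K _ _ a h2 h4
    rcases Nat.eq_zero_or_pos k with rfl | hk1
    · simpa using X_pow_sub_C_irreducible_of_prime Nat.prime_two h2
    have h4' : ∀ b : K, a ≠ -4 * b ^ 4 := h4 (by omega)
    rw [pow_succ]
    apply X_pow_mul_sub_C_irreducible (X_pow_sub_C_irreducible_of_prime Nat.prime_two h2)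
    intro E _ _ x hx
    have hint : IsIntegral K x := by
      by_contra h
      rw [minpoly.eq_zero h] at hx
      exact (monic_X_pow_sub_C a (two_ne_zero)).ne_zero hx.symm
    have hdeg : (minpoly K x).natDegree = 2 := by rw [hx, natDegree_X_pow_sub_C]
    haveI : CharZero K⟮x⟯ := charZero_of_injective_algebraMap (algebraMap K K⟮x⟯).injective
    have hmin : minpoly K (IntermediateField.AdjoinSimple.gen K x) = X ^ 2 - C a := by
      rw [IntermediateField.minpoly_gen, hx]
    have hspan := adjoin_quad_span hint hdeg
    apply IH hk1
    · intro b hb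
      exact quad_no_sqrt hmin hspan h4' b 1 (one_pow 2) (by simpa using hb)
    · intro _ b hb
      apply quad_no_sqrt hmin hspan h4' (2 * b ^ 2) (-1) (by ring)
      rw [map_neg, map_one, neg_one_mul, hb]; ring

/-- The hard direction of Capelli's theorem. -/
lemma capelli_irreducible {K : Type u} [Field K] [CharZero K] {n : ℕ} (hn : n ≠ 0) {a : K}
    (hp : ∀ p : ℕ, p.Prime → p ∣ n → ∀ b : K, b ^ p ≠ a)
    (h4 : 4 ∣ n → ∀ b : K, a ≠ -4 * b ^ 4) :
    Irreducible (X ^ n - C a) := by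
  set k := n.factorization 2 with hkdef
  set m := n / 2 ^ k with hmdef
  have hnm : 2 ^ k * m = n := Nat.ordProj_mul_ordCompl_eq_self n 2
  have hmodd : Odd m := Nat.odd_iff.mpr (Nat.two_dvd_ne_zero.mp (Nat.not_dvd_ordCompl Nat.prime_two hn))
  rcases Nat.eq_zero_or_pos k with hk0 | hk1
  · rw [hk0, pow_zero, one_mul] at hnm
    exact X_pow_sub_C_irreducible_of_odd (hnm ▸ hmodd)
      (fun p hp' hpn b => hp p hp' (hnm ▸ hpn) b)
  · rw [← hnm, mul_comm]
    apply X_pow_mul_sub_C_irreducible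
      (X_pow_two_pow_sub_C_irreducible hk1 a
        (hp 2 Nat.prime_two (hnm ▸ Dvd.dvd.mul_right (dvd_pow_self 2 (by omega)) m))
        (fun hk2 => h4 (hnm ▸ Dvd.dvd.mul_right (by
          have : (4 : ℕ) = 2 ^ 2 := by norm_num
          exact this ▸ pow_dvd_pow 2 hk2) m)))
    intro E _ _ x hx
    have hint : IsIntegral K x := by
      by_contra h
      rw [minpoly.eq_zero h] at hx
      exact (monic_X_pow_sub_C a (pow_ne_zero k two_ne_zero)).ne_zero hx.symm
    apply X_pow_sub_C_irreducible_of_odd hmodd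
    intro q hq hqm b hb
    apply hp q hq (hnm ▸ Dvd.dvd.mul_left hqm (2 ^ k)) (-(Algebra.norm K b))
    have hnorm : Algebra.norm K (IntermediateField.AdjoinSimple.gen K x) = -a := by
      rw [← IntermediateField.adjoin.powerBasis_gen hint,
        Algebra.PowerBasis.norm_gen_eq_coeff_zero_minpoly]
      have h2k : 2 ^ k ≠ 0 := by positivity
      have heven : Even (2 ^ k) := ⟨2 ^ (k - 1), by rw [← two_mul, ← pow_succ']; congr 1; omega⟩
      simp only [IntermediateField.adjoin.powerBasis_dim, IntermediateField.adjoin.powerBasis_gen,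
        IntermediateField.minpoly_gen, hx, natDegree_X_pow_sub_C]
      rw [coeff_sub, coeff_X_pow, coeff_C]
      simp [h2k, Ne.symm h2k, heven.neg_one_pow]
    have hnb : (Algebra.norm K b) ^ q = -a := by
      rw [← map_pow, hb, hnorm]
    have h2m : ¬ (2 : ℕ) ∣ m := by
      rw [Nat.two_dvd_ne_zero]
      exact Nat.odd_iff.mp hmodd
    have hqodd : Odd q := hq.odd_of_ne_two (fun h => h2m (h ▸ hqm))
    rw [hqodd.neg_pow, hnb, neg_neg]

/-- A helper: `X ^ (2*s) + u·X^s + v` has degree `2*s`. -/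
lemma degree_quad_factor {K : Type u} [Field K] (s : ℕ) (hs : 1 ≤ s) (u v : K) :
    ((X : K[X]) ^ (2 * s) + C u * X ^ s + C v).degree = ((2 * s : ℕ) : WithBot ℕ) := by
  have hlt : (C u * X ^ s + C v).degree < ((X : K[X]) ^ (2 * s)).degree := by
    rw [degree_X_pow]
    calc (C u * X ^ s + C v).degree ≤ max (C u * X ^ s).degree (C v).degree := degree_add_le _ _
      _ ≤ max (s : WithBot ℕ) 0 := max_le_max (degree_C_mul_X_pow_le s u) degree_C_le
      _ < (2 * s : ℕ) := by
          rw [max_lt_iff]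
          constructor
          · exact_mod_cast (by omega : s < 2 * s)
          · exact_mod_cast (by omega : 0 < 2 * s)
  rw [add_assoc, degree_add_eq_left_of_degree_lt hlt, degree_X_pow]

end Capelli

theorem stmt_17 (c : ℕ) (hc : 2 ≤ c) (K : Type*) [Field K] [Algebra ℚ K]
    (α : K) (halg : IsAlgebraic ℚ α) (hgen : Algebra.adjoin ℚ {α} = ⊤) :
    ¬ Irreducible (X ^ c - C α : Polynomial K) ↔
      (∃ p : ℕ, p.Prime ∧ p ∣ c ∧ ∃ β : K, α = β ^ p) ∨
        (4 ∣ c ∧ ∃ β : K, α = -4 * β ^ 4) := by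
  haveI : CharZero K := charZero_of_injective_algebraMap (algebraMap ℚ K).injective
  constructor
  · intro hred
    by_contra hcon
    push_neg at hcon
    obtain ⟨h1, h2⟩ := hcon
    exact hred (capelli_irreducible (by omega)
      (fun p hp hpc b hb => h1 p hp hpc b hb.symm)
      (fun h4c b => h2 h4c b))
  · rintro (⟨p, hp, hpc, β, rfl⟩ | ⟨h4c, β, rfl⟩) <;> intro hirr
    · obtain ⟨s, hs⟩ := hpc
      have hs1 : 0 < s := by
        rcases Nat.eq_zero_or_pos s with rfl | h
        · omega
        · exact h
      have hsc : s < c := by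
        have := hp.two_le
        nlinarith
      have hdvd : (X ^ s - C β : K[X]) ∣ X ^ c - C (β ^ p) := by
        have h := sub_dvd_pow_sub_pow (X ^ s : K[X]) (C β) p
        rwa [← pow_mul, ← map_pow, mul_comm s p, ← hs] at h
      obtain ⟨t, ht⟩ := hdvd
      rcases hirr.isUnit_or_isUnit ht with h | h
      · rw [Polynomial.isUnit_iff_degree_eq_zero, degree_X_pow_sub_C hs1] at h
        exact_mod_cast (by omega : s ≠ 0) (by exact_mod_cast h)
      · rw [Polynomial.isUnit_iff_degree_eq_zero] at h
        have hdeg := congrArg degree ht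
        rw [degree_X_pow_sub_C (by omega : 0 < c), degree_mul,
          degree_X_pow_sub_C hs1, h, add_zero] at hdeg
        exact absurd (by exact_mod_cast hdeg : c = s) (by omega)
    · obtain ⟨s, hs⟩ := h4c
      have hs1 : 1 ≤ s := by omega
      have heq : (X ^ c - C (-4 * β ^ 4) : K[X]) =
          (X ^ (2 * s) + C (-(2 * β)) * X ^ s + C (2 * β ^ 2)) *
            (X ^ (2 * s) + C (2 * β) * X ^ s + C (2 * β ^ 2)) := by
        rw [hs]
        simp only [map_neg, map_mul, map_pow, map_ofNat]
        ring
      rcases hirr.isUnit_or_isUnit heq with h | h <;>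
        rw [Polynomial.isUnit_iff_degree_eq_zero, degree_quad_factor s hs1] at h <;>
        exact (by omega : 2 * s ≠ 0) (by exact_mod_cast h)
end

section
/- Let f(x), h(x) ∈ ℚ[x] with f irreducible over ℚ, and let α be a root of f. Then f(h(x)) is reducible over ℚ if and only if h(x) - α is reducible over ℚ(α). -/
open Polynomial IntermediateField
open Module

private theorem assoc_natDegree {F : Type*} [Field F] {p q : F[X]} (hp : p ≠ 0)
    (h : Associated p q) : p.natDegree = q.natDegree := by
  obtain ⟨u, rfl⟩ := h
  rw [Polynomial.natDegree_mul hp u.ne_zero,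
    Polynomial.natDegree_eq_zero_of_isUnit u.isUnit, Nat.add_zero]

theorem stmt_18 (f h : Polynomial ℚ) (hf : Irreducible f)
    (α : ℂ) (hα : Polynomial.aeval α f = 0) :
    ¬ Irreducible (f.comp h) ↔
      ¬ Irreducible ((h.map (algebraMap ℚ ℚ⟮α⟯)) - C (AdjoinSimple.gen ℚ α)) := by
  by_cases hm : h.natDegree = 0
  · rw [Polynomial.eq_C_of_natDegree_eq_zero hm]
    refine iff_of_true ?_ ?_
    · rw [comp_C]; exact not_irreducible_C _
    · rw [map_C, ← C_sub]; exact not_irreducible_C _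
  refine not_congr ?_
  set K : IntermediateField ℚ ℂ := ℚ⟮α⟯ with hK
  set g : K[X] := h.map (algebraMap ℚ K) - C (AdjoinSimple.gen ℚ α) with hgdef
  have hf0 : f ≠ 0 := hf.ne_zero
  have hfn : f.natDegree ≠ 0 := fun e => (not_irreducible_C _) (eq_C_of_natDegree_eq_zero e ▸ hf)
  have hdegh : 0 < (h.map (algebraMap ℚ K)).degree := by
    rw [degree_map]
    exact natDegree_pos_iff_degree_pos.mp (Nat.pos_of_ne_zero hm)
  have hdegg : g.degree = (h.map (algebraMap ℚ K)).degree :=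
    degree_sub_eq_left_of_degree_lt (lt_of_le_of_lt degree_C_le hdegh)
  have hg0 : g ≠ 0 := by
    intro e
    rw [e, degree_zero] at hdegg
    exact absurd (hdegg ▸ hdegh) (by simp)
  have hgnat : g.natDegree = h.natDegree := by
    have := natDegree_eq_of_degree_eq hdegg
    rwa [natDegree_map] at this
  -- a common root γ
  have hdeg' : 0 < (g.map (algebraMap K ℂ)).degree := by rwa [degree_map, hdegg]
  obtain ⟨γ, hγ⟩ := Complex.exists_root hdeg'
  have hγg : Polynomial.aeval γ g = 0 := by
    rwa [aeval_def, ← eval_map]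
  have hαγ : Polynomial.aeval γ h = α := by
    have := hγg
    rw [hgdef, map_sub, aeval_C, aeval_map_algebraMap, AdjoinSimple.algebraMap_gen,
      sub_eq_zero] at this
    exact this
  have hch0 : f.comp h ≠ 0 := by
    intro e
    rcases comp_eq_zero_iff.mp e with e1 | ⟨_, e2⟩
    · exact hf0 e1
    · exact hm (by rw [e2]; simp)
  have hcomp0 : Polynomial.aeval γ (f.comp h) = 0 := by
    rw [aeval_comp, hαγ, hα]
  -- integrality
  have hintα : IsIntegral ℚ α := (IsAlgebraic.isIntegral ⟨f, hf0, hα⟩)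
  have hintγQ : IsIntegral ℚ γ := (IsAlgebraic.isIntegral ⟨f.comp h, hch0, hcomp0⟩)
  have hintγK : IsIntegral K γ := (IsAlgebraic.isIntegral ⟨g, hg0, hγg⟩)
  haveI : FiniteDimensional ℚ K := adjoin.finiteDimensional hintα
  haveI : FiniteDimensional K K⟮γ⟯ := adjoin.finiteDimensional hintγK
  -- finrank computations
  have hfr1 : finrank ℚ K = f.natDegree := by
    rw [hK, adjoin.finrank hintα, ← minpoly.eq_of_irreducible hf hα,
      natDegree_mul_C (inv_ne_zero (leadingCoeff_ne_zero.mpr hf0))]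
  have hγmem : γ ∈ ℚ⟮γ⟯ := mem_adjoin_simple_self ℚ γ
  have hαmem : α ∈ ℚ⟮γ⟯ := by
    rw [← hαγ]
    exact algebra_adjoin_le_adjoin ℚ _ (Polynomial.aeval_mem_adjoin_singleton ℚ γ)
  have htower : (K⟮γ⟯.restrictScalars ℚ) = ℚ⟮γ⟯ := by
    rw [hK]; erw [adjoin_adjoin_left]
    apply le_antisymm
    · rw [adjoin_le_iff]
      rintro x (rfl | rfl)
      · exact hαmem
      · exact hγmem
    · exact adjoin.mono _ _ _ (by simp [Set.subset_def])
  have hfr2 : finrank ℚ ℚ⟮γ⟯ = finrank ℚ K * finrank K K⟮γ⟯ := by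
    rw [← htower]
    exact (Module.finrank_mul_finrank ℚ K K⟮γ⟯).symm
  have hminQ : (minpoly ℚ γ).natDegree = f.natDegree * (minpoly K γ).natDegree := by
    rw [← adjoin.finrank hintγQ, ← adjoin.finrank hintγK, hfr2, hfr1]
  have hdvdQ : minpoly ℚ γ ∣ f.comp h := minpoly.dvd ℚ γ hcomp0
  have hdvdK : minpoly K γ ∣ g := minpoly.dvd K γ hγg
  constructor
  · intro hirr
    -- f.comp h irreducible → g irreducible
    have hassoc : Associated (minpoly ℚ γ) (f.comp h) :=
      (minpoly.irreducible hintγQ).associated_of_dvd hirr hdvdQ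
    have hdeq : (minpoly ℚ γ).natDegree = (f.comp h).natDegree :=
      assoc_natDegree (minpoly.ne_zero hintγQ) hassoc
    rw [natDegree_comp, hminQ] at hdeq
    have hKdeg : (minpoly K γ).natDegree = g.natDegree := by
      rw [hgnat]
      exact Nat.eq_of_mul_eq_mul_left (Nat.pos_of_ne_zero hfn) hdeq
    have hassocK : Associated (minpoly K γ) g :=
      associated_of_dvd_of_natDegree_le hdvdK hg0 hKdeg.ge
    exact hassocK.irreducible (minpoly.irreducible hintγK)
  · intro hirr
    have hassoc : Associated (minpoly K γ) g :=
      (minpoly.irreducible hintγK).associated_of_dvd hirr hdvdK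
    have hdeq : (minpoly K γ).natDegree = g.natDegree :=
      assoc_natDegree (minpoly.ne_zero hintγK) hassoc
    have : (minpoly ℚ γ).natDegree = (f.comp h).natDegree := by
      rw [natDegree_comp, hminQ, hdeq, hgnat]
    have hassoc2 : Associated (minpoly ℚ γ) (f.comp h) :=
      associated_of_dvd_of_natDegree_le hdvdQ hch0 this.ge
    exact hassoc2.irreducible (minpoly.irreducible hintγQ)
end
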